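/- arXiv:0707.1577 — 2 statements merged into one kernel-verified Lean document; each statement's English description precedes it below -/
import Mathlib

section
/- For even k ≥ 2 and sufficiently large n, there is a digraph D on n vertices with minimum semi-degree δ⁰(D) ≥ ⌈(n+k)/2⌉ - 2 which is not k-ordered: namely, let D consist of a complete digraph A of order ⌈n/2⌉ + k/2 - 1 and a complete digraph B of order ⌊n/2⌋ + k/2 sharing exactly k-1 vertices; choosing s_1, s_3, …, s_{k-1} in A \ B and s_2, s_4, …, s_k in B \ A, D has no directed cycle encountering s_1,…,s_k in this order. -/
/-- `l` is a directed cycle in the digraph with edge relation `A`: at least two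
distinct vertices, with consecutive vertices (cyclically) joined by edges. -/
def IsCycleList {V : Type*} (A : V → V → Prop) (l : List V) : Prop :=
  2 ≤ l.length ∧ l.Nodup ∧ l.Chain' A ∧
    ∀ a ∈ l.getLast?, ∀ b ∈ l.head?, A a b

/-- The cycle `l` encounters the vertices `s 0, …, s (k-1)` in this cyclic order:
some rotation of `l` contains them as a sublist in this order. -/
def EncountersInOrder {V : Type*} {k : ℕ} (l : List V) (s : Fin k → V) : Prop :=
  ∃ r, List.Sublist (List.ofFn s) (l.rotate r)

open Finset in
lemma card_filter_Ico (n c a : ℕ) (h : a ≤ n) :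
    ((Finset.univ : Finset (Fin n)).filter fun z => c ≤ z.val ∧ z.val < a).card = a - c := by
  rcases le_or_gt c a with hca | hca
  · have : ((Finset.univ : Finset (Fin n)).filter fun z => c ≤ z.val ∧ z.val < a) =
        Finset.map ⟨fun i : Fin (a - c) => (⟨c + i, by omega⟩ : Fin n),
          fun i j hij => by simpa [Fin.ext_iff] using hij⟩ Finset.univ := by
      ext z
      simp only [mem_filter, mem_univ, true_and, mem_map, Function.Embedding.coeFn_mk]
      constructor
      · rintro ⟨h1, h2⟩
        exact ⟨⟨z.val - c, by omega⟩, by apply Fin.ext; change c + (z.val - c) = z.val; omega⟩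
      · rintro ⟨i, rfl⟩
        have := i.isLt
        change c ≤ c + i.val ∧ c + i.val < a
        omega
    rw [this, Finset.card_map, Finset.card_univ, Fintype.card_fin]
  · have : ((Finset.univ : Finset (Fin n)).filter fun z => c ≤ z.val ∧ z.val < a) = ∅ := by
      ext z; simp; omega
    rw [this]; simp; omega

lemma crossing {α : Type*} (P Q : α → Prop) (A : α → α → Prop)
    (hA : ∀ x y, A x y → (P x ∧ P y) ∨ (Q x ∧ Q y))
    (v : ℕ → α) (hstep : ∀ i, A (v i) (v (i + 1)))
    (a b : ℕ) (hab : a < b) (hPa : P (v a)) (hPb : ¬ P (v b)) :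
    ∃ i, a ≤ i ∧ i < b ∧ P (v i) ∧ Q (v i) := by
  classical
  set T := (Finset.Ico a b).filter (fun i => P (v i)) with hT
  have haT : a ∈ T := by simp [hT, hab, hPa]
  have hne : T.Nonempty := ⟨a, haT⟩
  set i := T.max' hne with hi
  have hiT : i ∈ T := T.max'_mem hne
  simp only [hT, Finset.mem_filter, Finset.mem_Ico] at hiT
  obtain ⟨⟨hai, hib⟩, hPi⟩ := hiT
  have hnext : ¬ P (v (i + 1)) := by
    rcases eq_or_lt_of_le (Nat.succ_le_of_lt hib) with he | hlt
    · rw [show i + 1 = b by omega]; exact hPb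
    · intro hP
      have : i + 1 ∈ T := by simp [hT, Finset.mem_Ico]; exact ⟨⟨by omega, hlt⟩, hP⟩
      have := Finset.le_max' T _ this
      omega
  rcases hA _ _ (hstep i) with ⟨_, h⟩ | ⟨hQ1, _⟩
  · exact absurd h hnext
  · exact ⟨i, hai, hib, hPi, hQ1⟩

lemma cyclic_step {α : Type*} (A : α → α → Prop) (l : List α)
    (h2 : 2 ≤ l.length) (hch : l.Chain' A)
    (hwrap : ∀ a ∈ l.getLast?, ∀ b ∈ l.head?, A a b) (i : ℕ)
    (hi : i % l.length < l.length) (hi1 : (i + 1) % l.length < l.length) :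
    A (l.get ⟨i % l.length, hi⟩) (l.get ⟨(i + 1) % l.length, hi1⟩) := by
  set N := l.length with hN
  have hne : l ≠ [] := List.ne_nil_of_length_pos (by omega)
  have h1 : 1 % N = 1 := Nat.mod_eq_of_lt (by omega)
  by_cases hlt : i % N + 1 < N
  · have h3 : (i + 1) % N = i % N + 1 := by
      rw [Nat.add_mod, h1, Nat.mod_eq_of_lt hlt]
    have hkey := List.isChain_iff_getElem.mp hch (i % N) (by omega)
    simp only [List.get_eq_getElem]
    convert hkey using 2
  · have hx : i % N = N - 1 := by omega
    have h3 : (i + 1) % N = 0 := by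
      rw [Nat.add_mod, h1, hx, Nat.sub_add_cancel (by omega), Nat.mod_self]
    have hlast : l.getLast? = some (l.get ⟨N - 1, by omega⟩) := by
      rw [List.getLast?_eq_getLast_of_ne_nil hne]
      congr 1
      rw [List.get_eq_getElem]
      exact List.getLast_eq_getElem hne
    have hhead : l.head? = some (l.get ⟨0, by omega⟩) := by
      rw [List.head?_eq_head hne]
      congr 1
      rw [List.get_eq_getElem]
      exact List.head_eq_getElem_zero hne
    have hkey := hwrap _ (Option.mem_def.mpr hlast) _ (Option.mem_def.mpr hhead)
    convert hkey using 2
    · exact Fin.ext hx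
    · exact Fin.ext h3

/-- The extremal digraph: two overlapping complete digraphs `[0, aa)` and `[cc, n)`. -/
def ExtremalRel (n aa cc : ℕ) : Fin n → Fin n → Prop := fun v w =>
  v ≠ w ∧ ((v.val < aa ∧ w.val < aa) ∨ (cc ≤ v.val ∧ cc ≤ w.val))

instance (n aa cc : ℕ) : DecidableRel (ExtremalRel n aa cc) := fun v w => by
  unfold ExtremalRel; exact instDecidableAnd

set_option maxHeartbeats 1000000 in
/-- For even $k \ge 2$ and large $n$ there is a digraph on $n$ vertices with
minimum semi-degree $\lceil (n+k)/2 \rceil - 2$ which is not k-ordered. -/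
theorem extremal_example_not_k_ordered (k : ℕ) (hk : 2 ≤ k) (hke : Even k) :
    ∃ n₀ : ℕ, ∀ n : ℕ, n₀ ≤ n →
      ∃ (A : Fin n → Fin n → Prop) (_ : DecidableRel A),
        Irreflexive A ∧
        (∀ v : Fin n,
          (n + k + 1) / 2 - 2 ≤ (Finset.univ.filter fun w => A v w).card ∧
          (n + k + 1) / 2 - 2 ≤ (Finset.univ.filter fun w => A w v).card) ∧
        ¬ (∀ s : Fin k → Fin n, Function.Injective s →
            ∃ l : List (Fin n), IsCycleList A l ∧ EncountersInOrder l s) := by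
  obtain ⟨m, hm⟩ := hke
  refine ⟨4 * k + 4, fun n hn => ?_⟩
  set aa := (n + 1) / 2 + m - 1 with haa
  set cc := (n + 1) / 2 - m with hcc
  have hm1 : 1 ≤ m := by omega
  have hmcc : m ≤ cc := by omega
  have h0k : 0 < k := by omega
  have hccaa : cc + (k - 1) = aa := by omega
  have haan : aa + m ≤ n := by omega
  refine ⟨ExtremalRel n aa cc, inferInstance, fun v hv => hv.1 rfl, ?_, ?_⟩
  · -- degree bounds
    intro v
    have hsym : (Finset.univ.filter fun w => ExtremalRel n aa cc w v)
        = (Finset.univ.filter fun w => ExtremalRel n aa cc v w) := by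
      ext w
      simp only [ExtremalRel, Finset.mem_filter, Finset.mem_univ, true_and, ne_eq, Fin.ext_iff]
      omega
    rw [hsym]
    have hvn := v.isLt
    suffices h : (n + k + 1) / 2 - 2 ≤ (Finset.univ.filter fun w => ExtremalRel n aa cc v w).card
      from ⟨h, h⟩
    by_cases hv1 : v.val < cc
    · have e1 : (Finset.univ.filter fun w => ExtremalRel n aa cc v w)
          = ((Finset.univ : Finset (Fin n)).filter fun z => 0 ≤ z.val ∧ z.val < aa).erase v := by
        ext w
        have := w.isLt
        simp only [ExtremalRel, Finset.mem_filter, Finset.mem_univ, true_and, ne_eq,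
          Finset.mem_erase, Fin.ext_iff]
        omega
      rw [e1, Finset.card_erase_of_mem, card_filter_Ico n 0 aa (by omega)]
      · omega
      · simp only [Finset.mem_filter, Finset.mem_univ, true_and]
        omega
    · by_cases hv2 : v.val < aa
      · have e1 : (Finset.univ.filter fun w => ExtremalRel n aa cc v w)
            = ((Finset.univ : Finset (Fin n)).filter fun z => 0 ≤ z.val ∧ z.val < n).erase v := by
          ext w
          have := w.isLt
          simp only [ExtremalRel, Finset.mem_filter, Finset.mem_univ, true_and, ne_eq,
            Finset.mem_erase, Fin.ext_iff]
          omega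
        rw [e1, Finset.card_erase_of_mem, card_filter_Ico n 0 n (by omega)]
        · omega
        · simp only [Finset.mem_filter, Finset.mem_univ, true_and]
          omega
      · have e1 : (Finset.univ.filter fun w => ExtremalRel n aa cc v w)
            = ((Finset.univ : Finset (Fin n)).filter fun z => cc ≤ z.val ∧ z.val < n).erase v := by
          ext w
          have := w.isLt
          simp only [ExtremalRel, Finset.mem_filter, Finset.mem_univ, true_and, ne_eq,
            Finset.mem_erase, Fin.ext_iff]
          omega
        rw [e1, Finset.card_erase_of_mem, card_filter_Ico n cc n (by omega)]
        · omega
        · simp only [Finset.mem_filter, Finset.mem_univ, true_and]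
          omega
  · -- not k-ordered
    intro H
    set s : Fin k → Fin n := fun j =>
      if Even j.val then ⟨j.val / 2, by have := j.isLt; omega⟩
      else ⟨aa + j.val / 2, by have := j.isLt; omega⟩ with hs
    have hs_even : ∀ j : Fin k, Even j.val → (s j).val < cc := by
      intro j hj
      have := j.isLt
      simp only [hs, if_pos hj]
      omega
    have hs_odd : ∀ j : Fin k, ¬ Even j.val → aa ≤ (s j).val := by
      intro j hj
      simp only [hs, if_neg hj]
      omega
    have hsinj : Function.Injective s := by
      intro j j' h
      have h' : (s j).val = (s j').val := congrArg Fin.val h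
      have hjk := j.isLt
      have hj'k := j'.isLt
      by_cases e1 : Even j.val <;> by_cases e2 : Even j'.val <;>
        simp only [hs, e1, e2, if_true, if_false, if_pos, if_neg, not_false_iff] at h' <;>
        simp only [Nat.even_iff] at e1 e2 <;>
        exact Fin.ext (by omega)
    obtain ⟨l, hcycle, r, hsub⟩ := H s hsinj
    obtain ⟨hlen2, hnodup, hchain, hwrap⟩ := hcycle
    set l' : List (Fin n) := l.rotate r with hl'
    have hLl : l'.length = l.length := List.length_rotate l r
    set L := l'.length with hLdef
    have hL2 : 2 ≤ L := by omega
    have hL0 : 0 < L := by omega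
    have hnd' : l'.Nodup := List.nodup_rotate.mpr hnodup
    obtain ⟨v, hv⟩ : ∃ v : ℕ → Fin n, ∀ i, v i = l'.get ⟨i % L, Nat.mod_lt _ hL0⟩ :=
      ⟨_, fun i => rfl⟩
    have hvrot : ∀ i : ℕ, v i = l.get ⟨(i + r) % l.length, Nat.mod_lt _ (by omega)⟩ := by
      intro i
      rw [hv]
      rw [List.get_rotate]
      congr 1
      apply Fin.ext
      simp only [Fin.val_mk]
      conv_lhs => rw [show (i % L) = i % l.length from by rw [hLl]]
      rw [Nat.add_mod (i % l.length) r, Nat.mod_mod_of_dvd i dvd_rfl, ← Nat.add_mod]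
    have hstep : ∀ i, ExtremalRel n aa cc (v i) (v (i + 1)) := by
      intro i
      rw [hvrot i, hvrot (i + 1)]
      have hc := cyclic_step (ExtremalRel n aa cc) l hlen2 hchain hwrap (i + r)
        (Nat.mod_lt _ (by omega)) (Nat.mod_lt _ (by omega))
      convert hc using 2
      exact Fin.ext (by rw [show i + 1 + r = i + r + 1 from by omega])
    obtain ⟨f, hf⟩ := List.sublist_iff_exists_fin_orderEmbedding_get_eq.mp hsub
    have hklen : (List.ofFn s).length = k := List.length_ofFn (f := s)
    obtain ⟨p, hpdef⟩ : ∃ p : Fin k → ℕ, ∀ j, p j = (f (Fin.cast hklen.symm j)).val :=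
      ⟨_, fun _ => rfl⟩
    have hpL : ∀ j, p j < L := fun j => by rw [hpdef]; exact (f _).isLt
    have hpmono : ∀ j j' : Fin k, j.val < j'.val → p j < p j' := by
      intro j j' hjj'
      rw [hpdef, hpdef]
      exact f.strictMono (show Fin.cast hklen.symm j < Fin.cast hklen.symm j' from hjj')
    have hvp : ∀ j : Fin k, v (p j) = s j := by
      intro j
      have h1 := (hf (Fin.cast hklen.symm j)).symm
      calc v (p j) = l'.get ⟨p j % L, Nat.mod_lt _ hL0⟩ := hv _
        _ = l'.get (f (Fin.cast hklen.symm j)) := by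
            congr 1
            exact Fin.ext (by simp only [Fin.val_mk]; rw [Nat.mod_eq_of_lt (hpL j), hpdef])
        _ = (List.ofFn s).get (Fin.cast hklen.symm j) := h1
        _ = s j := by simp [List.get_ofFn]
    obtain ⟨q, hq_lt, hqk⟩ : ∃ q : ℕ → ℕ, (∀ t (h : t < k), q t = p ⟨t, h⟩) ∧
        q k = p ⟨0, h0k⟩ + L :=
      ⟨fun t => if h : t < k then p ⟨t, h⟩ else p ⟨0, h0k⟩ + L,
        fun t h => dif_pos h, dif_neg (lt_irrefl k)⟩
    have hvq : ∀ t (h : t < k), v (q t) = s ⟨t, h⟩ := by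
      intro t h
      rw [hq_lt t h, hvp]
    have hper : ∀ x, v (x + L) = v x := by
      intro x
      rw [hv, hv]
      congr 1
      exact Fin.ext (by simp [Nat.add_mod_right])
    have hvqk : v (q k) = s ⟨0, h0k⟩ := by
      rw [hqk, hper, hvp]
    have hmono_q : ∀ t t', t < t' → t' ≤ k → q t < q t' := by
      intro t t' h1 h2
      rcases lt_or_eq_of_le h2 with h3 | h3
      · rw [hq_lt t (lt_trans h1 h3), hq_lt t' h3]
        exact hpmono _ _ h1
      · rw [h3, hq_lt t (h3 ▸ h1), hqk]
        have := hpL ⟨t, h3 ▸ h1⟩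
        omega
    have key : ∀ t (ht : t < k), ∃ i, q t < i ∧ i < q (t + 1) ∧
        cc ≤ (v i).val ∧ (v i).val < aa := by
      intro t ht
      by_cases hev : Even t
      · have hev' : t % 2 = 0 := Nat.even_iff.mp hev
        have ht1 : t + 1 < k := by omega
        have hPa : (v (q t)).val < aa := by
          rw [hvq t ht]
          have := hs_even ⟨t, ht⟩ hev
          omega
        have hPb : ¬ (v (q (t + 1))).val < aa := by
          rw [hvq (t + 1) ht1]
          have := hs_odd ⟨t + 1, ht1⟩ (by simp [Nat.even_iff]; omega)
          omega
        obtain ⟨i, h1, h2, h3, h4⟩ := crossing (fun z : Fin n => z.val < aa)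
          (fun z : Fin n => cc ≤ z.val) (ExtremalRel n aa cc)
          (fun x y hxy => hxy.2) v hstep (q t) (q (t + 1))
          (hmono_q t (t + 1) (by omega) (by omega)) hPa hPb
        refine ⟨i, ?_, h2, h4, h3⟩
        rcases lt_or_eq_of_le h1 with h | h
        · exact h
        · exfalso
          have hlt : (v (q t)).val < cc := by
            rw [hvq t ht]
            exact hs_even ⟨t, ht⟩ hev
          rw [h] at hlt
          omega
      · have hev' : t % 2 = 1 := Nat.odd_iff.mp (Nat.not_even_iff_odd.mp hev)
        have hPa : cc ≤ (v (q t)).val := by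
          rw [hvq t ht]
          have := hs_odd ⟨t, ht⟩ hev
          omega
        have hPb : ¬ cc ≤ (v (q (t + 1))).val := by
          rcases Nat.lt_or_ge (t + 1) k with h | h
          · rw [hvq (t + 1) h]
            have := hs_even ⟨t + 1, h⟩ (by simp [Nat.even_iff]; omega)
            omega
          · have ht1 : t + 1 = k := by omega
            rw [ht1, hvqk]
            have := hs_even ⟨0, h0k⟩ (by simp)
            omega
        obtain ⟨i, h1, h2, h3, h4⟩ := crossing (fun z : Fin n => cc ≤ z.val)
          (fun z : Fin n => z.val < aa) (ExtremalRel n aa cc)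
          (fun x y hxy => hxy.2.symm) v hstep (q t) (q (t + 1))
          (hmono_q t (t + 1) (by omega) (by omega)) hPa hPb
        refine ⟨i, ?_, h2, h3, h4⟩
        rcases lt_or_eq_of_le h1 with h | h
        · exact h
        · exfalso
          have hlt : aa ≤ (v (q t)).val := by
            rw [hvq t ht]
            exact hs_odd ⟨t, ht⟩ hev
          rw [h] at hlt
          omega
    have key' : ∀ j : Fin k, ∃ i, q j.val < i ∧ i < q (j.val + 1) ∧
        cc ≤ (v i).val ∧ (v i).val < aa := fun j => key j.val j.2
    choose g hg1 hg2 hg3 hg4 using key'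
    have hfact : ∀ j : Fin k,
        (p j < g j % L ∧ ∀ h : j.val + 1 < k, g j % L < p ⟨j.val + 1, h⟩) ∨
        (j.val + 1 = k ∧ g j % L < p ⟨0, h0k⟩) := by
      intro j
      have hg1' := hg1 j
      have hg2' := hg2 j
      rw [hq_lt j.val j.2] at hg1'
      have hje : (⟨j.val, j.2⟩ : Fin k) = j := rfl
      rw [hje] at hg1'
      by_cases hj1 : j.val + 1 < k
      · left
        rw [hq_lt _ hj1] at hg2'
        have hgL : g j < L := lt_trans hg2' (hpL _)
        rw [Nat.mod_eq_of_lt hgL]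
        exact ⟨hg1', fun _ => hg2'⟩
      · have hj1' : j.val + 1 = k := by have := j.2; omega
        rw [hj1', hqk] at hg2'
        rcases Nat.lt_or_ge (g j) L with h | h
        · left
          rw [Nat.mod_eq_of_lt h]
          exact ⟨hg1', fun hcon => absurd hcon hj1⟩
        · right
          refine ⟨hj1', ?_⟩
          have h2L : g j < 2 * L := by have := hpL ⟨0, h0k⟩; omega
          have e1 : g j % L = (g j - L) % L := Nat.mod_eq_sub_mod h
          have e2 : (g j - L) % L = g j - L := Nat.mod_eq_of_lt (by omega)
          omega
    have haux : ∀ j j' : Fin k, j.val < j'.val → g j % L ≠ g j' % L := by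
      intro j j' hlt
      rcases hfact j' with ⟨hA1', _⟩ | ⟨hB1', hB2'⟩
      · rcases hfact j with ⟨hA1, hA2⟩ | ⟨hB1, _⟩
        · have hj1 : j.val + 1 < k := by have := j'.2; omega
          have h1 := hA2 hj1
          have h2 : p ⟨j.val + 1, hj1⟩ ≤ p j' := by
            rcases Nat.lt_or_ge (j.val + 1) j'.val with h | h
            · exact le_of_lt (hpmono _ _ (by simpa using h))
            · have : (⟨j.val + 1, hj1⟩ : Fin k) = j' := Fin.ext (by simp only [Fin.val_mk]; omega)
              rw [this]
          omega
        · have := j'.2; omega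
      · rcases hfact j with ⟨hA1, _⟩ | ⟨hB1, _⟩
        · have h2 : p ⟨0, h0k⟩ ≤ p j := by
            rcases Nat.eq_zero_or_pos j.val with h | h
            · have : (⟨0, h0k⟩ : Fin k) = j := Fin.ext (by simp only [Fin.val_mk]; omega)
              rw [this]
            · exact le_of_lt (hpmono _ _ (by simpa using h))
          omega
        · omega
    have hWinj : Function.Injective (fun j : Fin k => v (g j)) := by
      intro j j' hWe
      have hWe' : v (g j) = v (g j') := hWe
      have hres : g j % L = g j' % L := by
        have hget : l'.get ⟨g j % L, Nat.mod_lt _ hL0⟩ = l'.get ⟨g j' % L, Nat.mod_lt _ hL0⟩ := by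
          rw [← hv, ← hv]; exact hWe'
        have := List.nodup_iff_injective_get.mp hnd' hget
        exact congrArg Fin.val this
      by_contra hne
      rcases Nat.lt_trichotomy j.val j'.val with h | h | h
      · exact haux j j' h hres
      · exact hne (Fin.ext h)
      · exact haux j' j h hres.symm
    have hWmem : ∀ j ∈ (Finset.univ : Finset (Fin k)),
        v (g j) ∈ (Finset.univ : Finset (Fin n)).filter (fun z => cc ≤ z.val ∧ z.val < aa) := by
      intro j _
      simp only [Finset.mem_filter, Finset.mem_univ, true_and]
      exact ⟨hg3 j, hg4 j⟩
    have hcount := Finset.card_le_card_of_injOn (fun j : Fin k => v (g j)) hWmem hWinj.injOn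
    rw [card_filter_Ico n cc aa (by omega), Finset.card_univ, Fintype.card_fin] at hcount
    omega
end

section
/- Let D be a strongly connected digraph such that d^+(x) + d^-(x) ≥ |D| for every vertex x. Then D contains a directed Hamilton cycle. -/
namespace GH

variable {V : Type*} {A : V → V → Prop}

/-- the vertex of the cycle list `C` at cyclic position `i`. -/
def listCyc (C : List V) [NeZero C.length] (i : ZMod C.length) : V :=
  C.get ⟨ZMod.val i, ZMod.val_lt i⟩

lemma listCyc_inj {C : List V} [NeZero C.length] (h : C.Nodup) :
    Function.Injective (listCyc C) := by
  intro i j hij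
  have h2 := List.nodup_iff_injective_get.mp h hij
  have : ZMod.val i = ZMod.val j := congrArg Fin.val h2
  have hri := ZMod.natCast_rightInverse (n := C.length) i
  have hrj := ZMod.natCast_rightInverse (n := C.length) j
  rw [← hri, ← hrj, this]

lemma listCyc_mem {C : List V} [NeZero C.length] (x : V) : x ∈ C ↔ ∃ i, listCyc C i = x := by
  constructor
  · intro hx
    obtain ⟨⟨k, hk⟩, rfl⟩ := List.mem_iff_get.mp hx
    refine ⟨(k : ZMod C.length), ?_⟩
    unfold listCyc
    congr 1
    exact Fin.ext (ZMod.val_cast_of_lt hk)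
  · rintro ⟨i, rfl⟩
    exact List.get_mem C _

lemma listCyc_arc {C : List V} [NeZero C.length] (hC : IsCycleList A C) (i : ZMod C.length) :
    A (listCyc C i) (listCyc C (i + 1)) := by
  obtain ⟨h2, hnd, hch, hwrap⟩ := hC
  have hne : C ≠ [] := List.ne_nil_of_length_pos (by omega)
  have hlt : (1 : ℕ) < C.length := h2
  have hv1 : (1 : ZMod C.length).val = 1 := by
    have : ((1 : ℕ) : ZMod C.length) = 1 := by push_cast; ring
    rw [← this, ZMod.val_cast_of_lt hlt]
  have hval : (i + 1).val = (i.val + 1) % C.length := by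
    rw [ZMod.val_add, hv1]
  rcases lt_or_ge (i.val + 1) C.length with hlt2 | hge
  · have hval' : (i + 1).val = i.val + 1 := by rw [hval, Nat.mod_eq_of_lt hlt2]
    have := List.isChain_iff_getElem.mp hch i.val (by omega)
    rw [← List.get_eq_getElem (i := ⟨i.val, by omega⟩), ← List.get_eq_getElem (i := ⟨i.val + 1, by omega⟩)] at this
    unfold listCyc
    convert this using 2
    exact Fin.ext hval'
  · have hiv : i.val = C.length - 1 := by have := ZMod.val_lt i; omega
    have hval' : (i + 1).val = 0 := by
      rw [hval, hiv]
      have : C.length - 1 + 1 = C.length := by omega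
      rw [this, Nat.mod_self]
    have := hwrap _ (Option.mem_def.mpr (List.getLast?_eq_getLast hne)) _
      (Option.mem_def.mpr (List.head?_eq_head hne))
    unfold listCyc
    have e1 : C.get ⟨i.val, ZMod.val_lt i⟩ = C.getLast hne := by
      rw [List.getLast_eq_getElem]; exact congrArg C.get (Fin.ext hiv)
    have e2 : C.get ⟨(i+1).val, ZMod.val_lt _⟩ = C.head hne := by
      have : C.get ⟨(i+1).val, ZMod.val_lt _⟩ = C.get ⟨0, by omega⟩ := by congr 1; exact Fin.ext hval'
      rw [this, ← List.get_mk_zero]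
    rw [e1, e2]
    exact this

end GH

namespace GH2
variable {V : Type*} {A : V → V → Prop}
open GH

lemma ear_core {C : List V} [NeZero C.length] (hC : IsCycleList A C)
    (hmax : ∀ l, IsCycleList A l → l.length ≤ C.length)
    {P : List V} (hne : P ≠ []) (hnd : P.Nodup) (hdisj : ∀ x ∈ P, x ∉ C)
    (hch : P.Chain' A) (i₀ : ZMod C.length) (q : ℕ) (hq1 : 1 ≤ q) (hqL : q ≤ C.length)
    (hqP : q ≤ P.length)
    (hin : A (listCyc C i₀) (P.head hne))
    (hout : A (P.getLast hne) (listCyc C (i₀ + (q : ZMod C.length)))) :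
    False := by
  have h2 : 2 ≤ C.length := hC.1
  set f : Fin (C.length - q + 1) → V :=
    fun j => listCyc C (i₀ + (q : ZMod C.length) + ((j : ℕ) : ZMod C.length)) with hf
  set seg : List V := List.ofFn f with hseg
  have hseglen : seg.length = C.length - q + 1 := by simp [hseg]
  have hsegne : seg ≠ [] := List.ne_nil_of_length_pos (by omega)
  have hcastinj : ∀ j₁ j₂ : Fin (C.length - q + 1),
      (((j₁ : ℕ) : ZMod C.length) = ((j₂ : ℕ) : ZMod C.length)) → j₁ = j₂ := by
    intro j₁ j₂ h
    have l₁ : (j₁ : ℕ) < C.length := by have := j₁.isLt; omega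
    have l₂ : (j₂ : ℕ) < C.length := by have := j₂.isLt; omega
    have : (((j₁ : ℕ) : ZMod C.length)).val = (((j₂ : ℕ) : ZMod C.length)).val := by rw [h]
    rw [ZMod.val_cast_of_lt l₁, ZMod.val_cast_of_lt l₂] at this
    exact Fin.ext this
  have hfinj : Function.Injective f := by
    intro j₁ j₂ h
    apply hcastinj
    have := listCyc_inj hC.2.1 h
    exact add_left_cancel this
  have hsegnd : seg.Nodup := List.nodup_ofFn.mpr hfinj
  have hsegmem : ∀ x ∈ seg, x ∈ C := by
    intro x hx
    obtain ⟨j, rfl⟩ := List.mem_ofFn.mp hx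
    exact (listCyc_mem _).mpr ⟨_, rfl⟩
  have hget : ∀ (i : ℕ) (h : i < seg.length), seg.get ⟨i, h⟩ =
      listCyc C (i₀ + (q : ZMod C.length) + ((i : ℕ) : ZMod C.length)) :=
    fun i h => List.get_ofFn f _
  set NewC : List V := seg ++ P with hNewC
  have hlen : NewC.length = (C.length - q + 1) + P.length := by simp [hNewC, hseglen]
  have hnodup : NewC.Nodup := by
    refine List.Nodup.append hsegnd hnd ?_
    intro x hx hxP
    exact hdisj x hxP (hsegmem x hx)
  have hchain : NewC.Chain' A := by
    rw [hNewC, List.Chain', List.isChain_append]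
    refine ⟨?_, hch, ?_⟩
    · rw [List.isChain_iff_getElem]
      intro i hi
      rw [← List.get_eq_getElem (i := ⟨i, by omega⟩), ← List.get_eq_getElem (i := ⟨i + 1, hi⟩)]
      rw [hget i (by omega), hget (i+1) (by omega)]
      have harc := listCyc_arc hC (i₀ + (q : ZMod C.length) + ((i : ℕ) : ZMod C.length))
      convert harc using 2
      push_cast
      ring
    · intro x hx y hy
      have hlast : seg.getLast? = some (listCyc C i₀) := by
        rw [List.getLast?_eq_getLast hsegne, List.getLast_eq_getElem, ← List.get_eq_getElem (i := ⟨seg.length - 1, by omega⟩)]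
        rw [hget _ (by omega)]
        have e0 : seg.length - 1 = C.length - q := by omega
        rw [e0]
        have e2 : ((q : ℕ) : ZMod C.length) + ((C.length - q : ℕ) : ZMod C.length) = 0 := by
          rw [← Nat.cast_add]
          have e3 : q + (C.length - q) = C.length := by omega
          rw [e3, ZMod.natCast_self]
        rw [add_assoc, e2, add_zero]
      rw [hlast] at hx
      rw [List.head?_eq_head hne] at hy
      simp only [Option.mem_def, Option.some.injEq] at hx hy
      rw [← hx, ← hy]
      exact hin
  have hwrapNew : ∀ a ∈ NewC.getLast?, ∀ b ∈ NewC.head?, A a b := by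
    intro a ha b hb
    rw [hNewC, List.getLast?_append] at ha
    rw [List.getLast?_eq_getLast hne] at ha
    simp only [Option.some_or, Option.mem_def, Option.some.injEq] at ha
    have hheadNew : NewC.head? = some (listCyc C (i₀ + (q : ZMod C.length))) := by
      rw [hNewC, List.head?_append]
      have hh : seg.head? = some (listCyc C (i₀ + (q : ZMod C.length))) := by
        rw [List.head?_eq_head hsegne]
        have h0 : seg.head hsegne = seg.get ⟨0, by omega⟩ := by
          rw [← List.get_mk_zero]
        rw [h0, hget 0 (by omega)]
        congr 1
        simp
      rw [hh]
      rfl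
    rw [hheadNew] at hb
    simp only [Option.mem_def, Option.some.injEq] at hb
    rw [← ha, ← hb]
    exact hout
  have hcyc : IsCycleList A NewC := ⟨by omega, hnodup, hchain, hwrapNew⟩
  have := hmax NewC hcyc
  omega

lemma ear {C : List V} [NeZero C.length] (hC : IsCycleList A C)
    (hmax : ∀ l, IsCycleList A l → l.length ≤ C.length)
    {P : List V} (hne : P ≠ []) (hnd : P.Nodup) (hdisj : ∀ x ∈ P, x ∉ C)
    (hch : P.Chain' A) (i₀ : ZMod C.length) (q : ℕ) (hq1 : 1 ≤ q)
    (hqP : q ≤ P.length)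
    (hin : A (listCyc C i₀) (P.head hne))
    (hout : A (P.getLast hne) (listCyc C (i₀ + (q : ZMod C.length)))) :
    False := by
  have h2 : 2 ≤ C.length := hC.1
  by_cases hdvd : C.length ∣ q
  · have h1 : ((C.length : ℕ) : ZMod C.length) = ((q : ℕ) : ZMod C.length) := by
      rw [ZMod.natCast_self]
      exact ((ZMod.natCast_eq_zero_iff q C.length).mpr hdvd).symm
    have hq2 : C.length ≤ q := Nat.le_of_dvd (by omega) hdvd
    exact ear_core hC hmax hne hnd hdisj hch i₀ C.length (by omega) le_rfl (by omega)
      hin (by rw [h1]; exact hout)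
  · have hmod : q % C.length ≠ 0 := fun h => hdvd (Nat.dvd_of_mod_eq_zero h)
    have h1 : ((q % C.length : ℕ) : ZMod C.length) = ((q : ℕ) : ZMod C.length) :=
      ZMod.natCast_mod q C.length
    have hlt : q % C.length < C.length := Nat.mod_lt _ (by omega)
    exact ear_core hC hmax hne hnd hdisj hch i₀ (q % C.length) (by omega) (by omega)
      (le_trans (Nat.mod_le q C.length) hqP) hin (by rw [h1]; exact hout)

end GH2

namespace GH3
open GH GH2 Finset
variable {V : Type*} {A : V → V → Prop}

def shiftSet {m : ℕ} (X : Finset (ZMod m)) (p : ℕ) : Finset (ZMod m) :=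
  X.biUnion fun x => (Finset.Icc 1 p).image fun q : ℕ => x + (q : ZMod m)

lemma mem_shiftSet {m : ℕ} {X : Finset (ZMod m)} {p : ℕ} {y : ZMod m} :
    y ∈ shiftSet X p ↔ ∃ x ∈ X, ∃ q : ℕ, 1 ≤ q ∧ q ≤ p ∧ x + (q : ZMod m) = y := by
  simp only [shiftSet, mem_biUnion, mem_image, Finset.mem_Icc]
  constructor
  · rintro ⟨x, hx, q, ⟨h1, h2⟩, rfl⟩
    exact ⟨x, hx, q, h1, h2, rfl⟩
  · rintro ⟨x, hx, q, h1, h2, rfl⟩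
    exact ⟨x, hx, q, ⟨h1, h2⟩, rfl⟩

lemma shiftSet_succ {m : ℕ} {X : Finset (ZMod m)} {p : ℕ} (hp : 1 ≤ p) :
    shiftSet X (p + 1) = shiftSet X p ∪ (shiftSet X p).image (· + 1) := by
  ext y
  simp only [mem_union, mem_image, mem_shiftSet]
  constructor
  · rintro ⟨x, hx, q, h1, h2, rfl⟩
    rcases Nat.lt_or_ge q (p + 1) with h | h
    · exact Or.inl ⟨x, hx, q, h1, by omega, rfl⟩
    · have : q = p + 1 := by omega
      subst this
      refine Or.inr ⟨x + (p : ZMod m), ⟨x, hx, p, hp, le_rfl, rfl⟩, ?_⟩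
      push_cast
      ring
  · rintro (⟨x, hx, q, h1, h2, rfl⟩ | ⟨z, ⟨x, hx, q, h1, h2, rfl⟩, rfl⟩)
    · exact ⟨x, hx, q, h1, by omega, rfl⟩
    · refine ⟨x, hx, q + 1, by omega, by omega, ?_⟩
      push_cast
      ring

lemma shift_closed_eq_univ {m : ℕ} [NeZero m] {Y : Finset (ZMod m)} (hne : Y.Nonempty)
    (hcl : Y.image (· + 1) ⊆ Y) : Y = Finset.univ := by
  obtain ⟨y₀, hy₀⟩ := hne
  have hk : ∀ k : ℕ, y₀ + (k : ZMod m) ∈ Y := by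
    intro k
    induction k with
    | zero => simpa using hy₀
    | succ k ih =>
      have : y₀ + ((k + 1 : ℕ) : ZMod m) = (y₀ + (k : ZMod m)) + 1 := by push_cast; ring
      rw [this]
      exact hcl (Finset.mem_image.mpr ⟨_, ih, rfl⟩)
  apply Finset.eq_univ_of_forall
  intro z
  have := hk (ZMod.val (z - y₀))
  rwa [ZMod.natCast_rightInverse (z - y₀), add_sub_cancel] at this

lemma shiftSet_card {m : ℕ} [NeZero m] {X : Finset (ZMod m)} (hX : X.Nonempty) :
    ∀ p : ℕ, 1 ≤ p → min m (X.card + p - 1) ≤ (shiftSet X p).card := by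
  intro p hp
  induction p, hp using Nat.le_induction with
  | base =>
    have : shiftSet X 1 = X.image (· + 1) := by
      ext y
      simp only [mem_shiftSet, mem_image]
      constructor
      · rintro ⟨x, hx, q, h1, h2, rfl⟩
        have : q = 1 := by omega
        subst this
        exact ⟨x, hx, by push_cast; ring⟩
      · rintro ⟨x, hx, rfl⟩
        exact ⟨x, hx, 1, le_rfl, le_rfl, by push_cast; ring⟩
    rw [this, Finset.card_image_of_injective _ (add_left_injective 1)]
    omega
  | succ p hp ih =>
    rw [shiftSet_succ hp]
    obtain ⟨x₀, hx₀⟩ := hX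
    have hYne : (shiftSet X p).Nonempty := ⟨x₀ + (1 : ℕ), mem_shiftSet.mpr ⟨x₀, hx₀, 1, le_rfl, hp, rfl⟩⟩
    by_cases hcl : (shiftSet X p).image (· + 1) ⊆ shiftSet X p
    · have huniv := shift_closed_eq_univ hYne hcl
      have h1 : (shiftSet X p).card ≤ (shiftSet X p ∪ (shiftSet X p).image (· + 1)).card :=
        Finset.card_le_card Finset.subset_union_left
      have h2 : (shiftSet X p).card = m := by rw [huniv, Finset.card_univ, ZMod.card]
      omega
    · rw [Finset.not_subset] at hcl
      obtain ⟨z, hz, hznot⟩ := hcl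
      have hins : insert z (shiftSet X p) ⊆ shiftSet X p ∪ (shiftSet X p).image (· + 1) := by
        intro w hw
        rcases Finset.mem_insert.mp hw with rfl | hw
        · exact Finset.mem_union_right _ hz
        · exact Finset.mem_union_left _ hw
      have h1 := Finset.card_le_card hins
      rw [Finset.card_insert_of_notMem hznot] at h1
      omega

/-- build a full cycle list from a cyclic function -/
lemma cycleList_ofFn {m : ℕ} [NeZero m] (hm : 2 ≤ m) (g : ZMod m → V)
    (hinj : Function.Injective g) (harc : ∀ i, A (g i) (g (i + 1))) :
    ∃ Z : List V, IsCycleList A Z ∧ Z.length = m ∧ ∀ x, x ∈ Z ↔ ∃ i, g i = x := by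
  set f : Fin m → V := fun t => g ((t : ℕ) : ZMod m) with hf
  set Z := List.ofFn f with hZ
  have hlen : Z.length = m := by simp [hZ]
  have hne : Z ≠ [] := List.ne_nil_of_length_pos (by omega)
  have hcast : ∀ t₁ t₂ : Fin m, (((t₁ : ℕ) : ZMod m) = ((t₂ : ℕ) : ZMod m)) → t₁ = t₂ := by
    intro t₁ t₂ h
    have : (((t₁ : ℕ) : ZMod m)).val = (((t₂ : ℕ) : ZMod m)).val := by rw [h]
    rw [ZMod.val_cast_of_lt t₁.isLt, ZMod.val_cast_of_lt t₂.isLt] at this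
    exact Fin.ext this
  have hfinj : Function.Injective f := fun t₁ t₂ h => hcast _ _ (hinj h)
  have hget : ∀ (i : ℕ) (h : i < Z.length), Z.get ⟨i, h⟩ = g ((i : ℕ) : ZMod m) :=
    fun i h => List.get_ofFn f _
  refine ⟨Z, ⟨by omega, List.nodup_ofFn.mpr hfinj, ?_, ?_⟩, hlen, ?_⟩
  · rw [List.Chain', List.isChain_iff_getElem]
    intro i hi
    rw [← List.get_eq_getElem (i := ⟨i, by omega⟩), ← List.get_eq_getElem (i := ⟨i + 1, hi⟩)]
    rw [hget i (by omega), hget (i + 1) (by omega)]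
    have := harc ((i : ℕ) : ZMod m)
    convert this using 2
    push_cast
    ring
  · intro a ha b hb
    rw [List.getLast?_eq_getLast hne, List.getLast_eq_getElem, ← List.get_eq_getElem (i := ⟨Z.length - 1, by omega⟩)] at ha
    rw [hget _ (by omega)] at ha
    rw [List.head?_eq_head hne] at hb
    have hb0 : Z.head hne = Z.get ⟨0, by omega⟩ := by rw [← List.get_mk_zero]
    rw [hb0, hget 0 (by omega)] at hb
    simp only [Option.mem_def, Option.some.injEq] at ha hb
    subst ha; subst hb
    have := harc (((Z.length - 1 : ℕ)) : ZMod m)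
    convert this using 2
    rw [hlen]
    have : ((m - 1 : ℕ) : ZMod m) + 1 = 0 := by
      have : ((m - 1 : ℕ) : ZMod m) + 1 = ((m - 1 + 1 : ℕ) : ZMod m) := by push_cast; ring
      rw [this]
      have e : m - 1 + 1 = m := by omega
      rw [e, ZMod.natCast_self]
    rw [this]
    push_cast
    ring
  · intro x
    constructor
    · intro hx
      obtain ⟨t, rfl⟩ := List.mem_ofFn.mp hx
      exact ⟨_, rfl⟩
    · rintro ⟨i, rfl⟩
      apply List.mem_ofFn.mpr
      refine ⟨⟨i.val, ZMod.val_lt i⟩, ?_⟩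
      simp only [hf]
      congr 1
      exact ZMod.natCast_rightInverse i

/-- build a wrap-around path list (covering all of the cycle, starting at s) -/
lemma wrapList_ofFn {m : ℕ} [NeZero m] (hm : 2 ≤ m) (g : ZMod m → V)
    (hinj : Function.Injective g) (harc : ∀ i, A (g i) (g (i + 1))) (s : ZMod m) :
    ∃ W : List V, W ≠ [] ∧ W.Nodup ∧ W.Chain' A ∧ W.length = m ∧
      (∀ x, x ∈ W ↔ ∃ i, g i = x) ∧ W.head? = some (g s) ∧ W.getLast? = some (g (s - 1)) := by
  set f : Fin m → V := fun t => g (s + ((t : ℕ) : ZMod m)) with hf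
  set W := List.ofFn f with hW
  have hlen : W.length = m := by simp [hW]
  have hne : W ≠ [] := List.ne_nil_of_length_pos (by omega)
  have hcast : ∀ t₁ t₂ : Fin m, (((t₁ : ℕ) : ZMod m) = ((t₂ : ℕ) : ZMod m)) → t₁ = t₂ := by
    intro t₁ t₂ h
    have : (((t₁ : ℕ) : ZMod m)).val = (((t₂ : ℕ) : ZMod m)).val := by rw [h]
    rw [ZMod.val_cast_of_lt t₁.isLt, ZMod.val_cast_of_lt t₂.isLt] at this
    exact Fin.ext this
  have hfinj : Function.Injective f := by
    intro t₁ t₂ h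
    exact hcast _ _ (add_left_cancel (hinj h))
  have hget : ∀ (i : ℕ) (h : i < W.length), W.get ⟨i, h⟩ = g (s + ((i : ℕ) : ZMod m)) :=
    fun i h => List.get_ofFn f _
  refine ⟨W, hne, List.nodup_ofFn.mpr hfinj, ?_, hlen, ?_, ?_, ?_⟩
  · rw [List.Chain', List.isChain_iff_getElem]
    intro i hi
    rw [← List.get_eq_getElem (i := ⟨i, by omega⟩), ← List.get_eq_getElem (i := ⟨i + 1, hi⟩)]
    rw [hget i (by omega), hget (i + 1) (by omega)]
    have := harc (s + ((i : ℕ) : ZMod m))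
    convert this using 2
    push_cast
    ring
  · intro x
    constructor
    · intro hx
      obtain ⟨t, rfl⟩ := List.mem_ofFn.mp hx
      exact ⟨_, rfl⟩
    · rintro ⟨i, rfl⟩
      apply List.mem_ofFn.mpr
      refine ⟨⟨(i - s).val, ZMod.val_lt _⟩, ?_⟩
      simp only [hf]
      congr 1
      have := ZMod.natCast_rightInverse (i - s)
      rw [this]
      ring
  · rw [List.head?_eq_head hne]
    have h0 : W.head hne = W.get ⟨0, by omega⟩ := by rw [← List.get_mk_zero]
    rw [h0, hget 0 (by omega)]
    congr 2
    simp
  · rw [List.getLast?_eq_getLast hne, List.getLast_eq_getElem, ← List.get_eq_getElem (i := ⟨W.length - 1, by omega⟩), hget _ (by omega)]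
    congr 1
    rw [hlen]
    have : ((m - 1 : ℕ) : ZMod m) = -1 := by
      have h1 : ((m - 1 : ℕ) : ZMod m) + 1 = ((m - 1 + 1 : ℕ) : ZMod m) := by push_cast; ring
      have e : m - 1 + 1 = m := by omega
      rw [e, ZMod.natCast_self] at h1
      linear_combination h1
    rw [this]
    ring

lemma exists_cross {R : V → V → Prop} {Pr : V → Prop} {u v : V}
    (h : Relation.ReflTransGen R u v) (hu : Pr u) (hv : ¬ Pr v) :
    ∃ a b, Pr a ∧ ¬ Pr b ∧ R a b := by
  revert hv
  induction h with
  | refl => exact fun hv => absurd hu hv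
  | @tail b c hub hbc ih =>
    intro hv
    by_cases hb : Pr b
    · exact ⟨b, c, hb, hv, hbc⟩
    · exact ih hb

end GH3

namespace GH4
open GH GH2 GH3 Finset
variable {V : Type*} {A : V → V → Prop}

lemma lemX {C : List V} [NeZero C.length] (hC : IsCycleList A C)
    (hmax : ∀ l, IsCycleList A l → l.length ≤ C.length)
    {κ : ℕ} [NeZero κ] (hκ : 2 ≤ κ) (w : ZMod κ → V)
    (hwinj : Function.Injective w)
    (hwarc : ∀ j, A (w j) (w (j + 1)))
    (hdisj : ∀ j, w j ∉ C)
    (S T : ZMod κ → Finset (ZMod C.length))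
    (hS : ∀ j i, i ∈ S j ↔ A (w j) (listCyc C i))
    (hT : ∀ j i, i ∈ T j ↔ A (listCyc C i) (w j))
    (h1 : ∀ j, C.length + 2 ≤ κ + (S j).card + (T j).card)
    (hTne : ∃ j, (T j).Nonempty)
    (hSne : ∃ j, (S j).Nonempty) : False := by
  have hκℓ : κ ≤ C.length := by
    obtain ⟨Z, hZ, hZlen, _⟩ := cycleList_ofFn (A := A) hκ w hwinj hwarc
    have := hmax Z hZ
    omega
  have h2ℓ : 2 ≤ C.length := hC.1
  have hcardℓ : Fintype.card (ZMod C.length) = C.length := ZMod.card _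
  have key : ∀ (j : ZMod κ) (q : ℕ), 1 ≤ q → q ≤ κ →
      ∀ i ∈ T (j + 1), i + (q : ZMod C.length) ∉ S j := by
    intro j q hq1 hqκ i hiT hiS
    obtain ⟨W, hWne, hWnd, hWch, hWlen, hWmem, hWhead, hWlast⟩ :=
      wrapList_ofFn (A := A) hκ w hwinj hwarc (j + 1)
    have hWdisj : ∀ x ∈ W, x ∉ C := by
      intro x hx
      obtain ⟨t, rfl⟩ := (hWmem x).mp hx
      exact hdisj t
    have hhead : W.head hWne = w (j + 1) := by
      rw [List.head?_eq_head hWne] at hWhead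
      exact Option.some_injective _ hWhead
    have hlast : W.getLast hWne = w j := by
      rw [List.getLast?_eq_getLast hWne] at hWlast
      have : W.getLast hWne = w (j + 1 - 1) := by injection hWlast
      simpa using this
    refine ear hC hmax hWne hWnd hWdisj hWch i q hq1 (by omega) ?_ ?_
    · rw [hhead]
      exact (hT _ _).mp hiT
    · rw [hlast]
      exact (hS _ _).mp hiS
  have key2 : ∀ j : ZMod κ, (S j).Nonempty → (T (j + 1)).Nonempty →
      (S j).card + (T (j + 1)).card + κ ≤ C.length + 1 := by
    intro j hSj hTj
    have hdisj2 : Disjoint (shiftSet (T (j + 1)) κ) (S j) := by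
      rw [Finset.disjoint_left]
      intro y hy hyS
      obtain ⟨x, hx, q, hq1, hq2, rfl⟩ := mem_shiftSet.mp hy
      exact key j q hq1 hq2 x hx hyS
    have hcard1 : (shiftSet (T (j + 1)) κ).card + (S j).card ≤ C.length := by
      have := Finset.card_union_of_disjoint hdisj2
      have hle : (shiftSet (T (j + 1)) κ ∪ S j).card ≤ C.length :=
        le_trans (Finset.card_le_univ _) (le_of_eq hcardℓ)
      omega
    have hmin := shiftSet_card hTj κ (by omega)
    have hSpos : 1 ≤ (S j).card := Finset.card_pos.mpr hSj
    rcases le_or_gt C.length ((T (j + 1)).card + κ - 1) with h | h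
    · have : min C.length ((T (j + 1)).card + κ - 1) = C.length := min_eq_left h
      rw [this] at hmin
      omega
    · have : min C.length ((T (j + 1)).card + κ - 1) = (T (j + 1)).card + κ - 1 :=
        min_eq_right (by omega)
      rw [this] at hmin
      have hTpos : 1 ≤ (T (j + 1)).card := Finset.card_pos.mpr hTj
      omega
  -- all T's are nonempty
  obtain ⟨j₀, hj₀⟩ := hTne
  have step : ∀ j' : ZMod κ, 1 ≤ (T (j' + 1)).card → 1 ≤ (T j').card := by
    intro j' h
    by_cases hs : (S j').Nonempty
    · have h2 := key2 j' hs (Finset.card_pos.mp h)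
      have h3 := h1 j'
      omega
    · have hs0 : (S j').card = 0 := by
        rw [Finset.card_eq_zero]
        exact Finset.not_nonempty_iff_eq_empty.mp hs
      have h3 := h1 j'
      omega
  have hallT : ∀ j : ZMod κ, 1 ≤ (T j).card := by
    have hk : ∀ k : ℕ, 1 ≤ (T (j₀ - (k : ZMod κ))).card := by
      intro k
      induction k with
      | zero => simpa using Finset.card_pos.mpr hj₀
      | succ k ih =>
        apply step
        have e : (j₀ - ((k + 1 : ℕ) : ZMod κ)) + 1 = j₀ - (k : ZMod κ) := by
          push_cast
          ring
        rw [e]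
        exact ih
    intro j
    have := hk (ZMod.val (j₀ - j))
    rwa [ZMod.natCast_rightInverse (j₀ - j), sub_sub_cancel] at this
  obtain ⟨j₁, hj₁⟩ := hSne
  have claim2 : ∀ k : ℕ, (S j₁).card + k ≤ (S (j₁ + (k : ZMod κ))).card := by
    intro k
    induction k with
    | zero => simp
    | succ k ih =>
      have hs1 : 1 ≤ (S j₁).card := Finset.card_pos.mpr hj₁
      have hsn : (S (j₁ + (k : ZMod κ))).Nonempty := Finset.card_pos.mp (by omega)
      have htn : (T (j₁ + (k : ZMod κ) + 1)).Nonempty := Finset.card_pos.mp (hallT _)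
      have h2 := key2 (j₁ + (k : ZMod κ)) hsn htn
      have h3 := h1 (j₁ + (k : ZMod κ) + 1)
      have e : j₁ + ((k + 1 : ℕ) : ZMod κ) = j₁ + (k : ZMod κ) + 1 := by
        push_cast
        ring
      rw [e]
      omega
  have hfin := claim2 (C.length + 1)
  have hbound : (S (j₁ + ((C.length + 1 : ℕ) : ZMod κ))).card ≤ C.length :=
    le_trans (Finset.card_le_univ _) (le_of_eq hcardℓ)
  omega

end GH4

namespace GH5
open GH GH2 GH3 GH4
variable {V : Type*} {R : V → V → Prop} {A : V → V → Prop}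

lemma chain_dedup : ∀ (l : List V) (a : V), List.Chain R a l →
    ∃ m, List.Chain R a m ∧ (a :: m).getLast? = (a :: l).getLast? ∧ (a :: m).Nodup ∧
      ∀ x ∈ a :: m, x ∈ a :: l := by
  intro l
  induction l with
  | nil => exact fun a _ => ⟨[], List.Chain.nil, rfl, by simp, by simp⟩
  | cons c t ih =>
    intro a hch
    rw [List.Chain, List.chain_cons] at hch
    obtain ⟨hac, hct⟩ := hch
    obtain ⟨m, hm_ch, hm_last, hm_nd, hm_sub⟩ := ih c hct
    by_cases ha : a ∈ c :: m
    · obtain ⟨l₁, l₂, hsplit⟩ := List.append_of_mem ha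
      cases l₁ with
      | nil =>
        simp only [List.nil_append, List.cons.injEq] at hsplit
        obtain ⟨rfl, rfl⟩ := hsplit
        refine ⟨m, hm_ch, ?_, hm_nd, ?_⟩
        · rw [hm_last, List.getLast?_cons_cons]
        · intro x hx
          exact List.mem_cons_of_mem _ (hm_sub x hx)
      | cons c₁ l₁' =>
        simp only [List.cons_append, List.cons.injEq] at hsplit
        obtain ⟨rfl, hm⟩ := hsplit
        subst hm
        have hch2 : List.Chain R a l₂ := (List.isChain_cons_split.mp hm_ch).2
        refine ⟨l₂, hch2, ?_, ?_, ?_⟩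
        · have e1 : (a :: c :: t).getLast? = (c :: t).getLast? := List.getLast?_cons_cons
          rw [e1, ← hm_last]
          have h1 : (c :: (l₁' ++ a :: l₂)).getLast? = (a :: l₂).getLast? := by
            have e2 : c :: (l₁' ++ a :: l₂) = (c :: l₁') ++ (a :: l₂) := by simp
            rw [e2, List.getLast?_append, List.getLast?_eq_getLast (List.cons_ne_nil _ _)]
            rfl
          rw [h1]
        · have : (l₁' ++ a :: l₂).Nodup := (List.nodup_cons.mp hm_nd).2
          exact this.of_append_right
        · intro x hx
          apply List.mem_cons_of_mem
          apply hm_sub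
          rcases List.mem_cons.mp hx with rfl | hx
          · exact List.mem_cons_of_mem _ (by simp)
          · exact List.mem_cons_of_mem _ (by simp [hx])
    · refine ⟨c :: m, List.chain_cons.mpr ⟨hac, hm_ch⟩, ?_, ?_, ?_⟩
      · rw [List.getLast?_cons_cons, List.getLast?_cons_cons, hm_last]
      · exact List.nodup_cons.mpr ⟨ha, hm_nd⟩
      · intro x hx
        rcases List.mem_cons.mp hx with rfl | hx
        · exact List.mem_cons_self
        · exact List.mem_cons_of_mem _ (hm_sub x hx)

lemma rtg_path {u v : V} (h : Relation.ReflTransGen R u v) :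
    ∃ m, List.Chain R u m ∧ (u :: m).getLast? = some v ∧ (u :: m).Nodup := by
  obtain ⟨l, hch, hlast⟩ := List.exists_isChain_cons_of_relationReflTransGen h
  obtain ⟨m, hm_ch, hm_last, hm_nd, _⟩ := chain_dedup l u hch
  refine ⟨m, hm_ch, ?_, hm_nd⟩
  rw [hm_last, List.getLast?_eq_getLast (List.cons_ne_nil _ _), hlast]

lemma chain_prefix_until (Pr : V → Prop) : ∀ (l : List V) (a : V), List.Chain R a l →
    ¬ Pr a → (∀ x ∈ (a :: l).getLast?, Pr x) →
    ∃ m y, List.Chain R a (m ++ [y]) ∧ Pr y ∧ (∀ x ∈ a :: m, ¬ Pr x) ∧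
      (a :: (m ++ [y])).Sublist (a :: l) := by
  intro l
  induction l with
  | nil =>
    intro a _ ha hl
    exact absurd (hl a (by simp)) ha
  | cons c t ih =>
    intro a hch ha hl
    rw [List.Chain, List.chain_cons] at hch
    obtain ⟨hac, hct⟩ := hch
    by_cases hc : Pr c
    · refine ⟨[], c, ?_, hc, ?_, ?_⟩
      · exact List.chain_cons.mpr ⟨hac, List.Chain.nil⟩
      · intro x hx
        simp only [List.mem_singleton] at hx
        subst hx; exact ha
      · simp only [List.nil_append]
        exact (List.nil_sublist t).cons₂ c |>.cons₂ a
    · have hl' : ∀ x ∈ (c :: t).getLast?, Pr x := by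
        intro x hx
        apply hl
        rwa [List.getLast?_cons_cons]
      obtain ⟨m, y, hch', hy, hnm, hsub⟩ := ih c hct hc hl'
      refine ⟨c :: m, y, List.chain_cons.mpr ⟨hac, hch'⟩, hy, ?_, ?_⟩
      · intro x hx
        rcases List.mem_cons.mp hx with rfl | hx
        · exact ha
        · exact hnm x hx
      · exact hsub.cons₂ a

lemma chain_all_mem_rtg : ∀ (l : List V) (a : V), List.Chain R a l →
    ∀ x ∈ a :: l, Relation.ReflTransGen R a x := by
  intro l
  induction l with
  | nil =>
    intro a _ x hx
    simp only [List.mem_singleton] at hx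
    subst hx; exact Relation.ReflTransGen.refl
  | cons c t ih =>
    intro a hch x hx
    rw [List.Chain, List.chain_cons] at hch
    rcases List.mem_cons.mp hx with rfl | hx
    · exact Relation.ReflTransGen.refl
    · exact Relation.ReflTransGen.head hch.1 (ih c hch.2 x hx)

lemma chain_weaken (hRA : ∀ x y, R x y → A x y) :
    ∀ (l : List V) (a : V), List.Chain R a l → (a :: l).Chain' A := by
  intro l a h
  have : List.Chain A a l := List.Chain.imp hRA h
  exact this

end GH5
namespace GHMain
open GH GH2 GH3 GH4 GH5 Finset

theorem gh_main : ∀ (n : ℕ) (V : Type u) [Fintype V] [DecidableEq V] (A : V → V → Prop)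
    [DecidableRel A],
    Fintype.card V = n → Irreflexive A → (∀ u v : V, Relation.ReflTransGen A u v) →
    (∀ x : V, Fintype.card V ≤
      (Finset.univ.filter fun w => A x w).card + (Finset.univ.filter fun w => A w x).card) →
    0 < n → ∃ l : List V, IsCycleList A l ∧ ∀ v, v ∈ l := by
  intro n
  induction n using Nat.strong_induction_on with
  | _ n IH =>
  intro V _ _ A _ hcard hirr hconn hdeg hpos
  classical
  have hVne : Nonempty V := Fintype.card_pos_iff.mp (by omega)
  obtain ⟨x⟩ := hVne
  -- n ≥ 2
  have hn2 : 2 ≤ n := by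
    by_contra h
    have hn1 : n = 1 := by omega
    have hall : ∀ w : V, w = x := by
      intro w
      have h1 : Fintype.card V ≤ 1 := by omega
      exact Fintype.card_le_one_iff.mp h1 w x
    have he1 : (Finset.univ.filter fun w => A x w) = ∅ := by
      apply Finset.filter_eq_empty_iff.mpr
      intro w _
      rw [hall w]
      exact hirr x
    have he2 : (Finset.univ.filter fun w => A w x) = ∅ := by
      apply Finset.filter_eq_empty_iff.mpr
      intro w _
      rw [hall w]
      exact hirr x
    have := hdeg x
    rw [he1, he2] at this
    simp only [Finset.card_empty] at this
    omega
  -- an arc exists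
  obtain ⟨a, b, hab⟩ : ∃ a b : V, A a b := by
    have := hdeg x
    by_cases h : (Finset.univ.filter fun w => A x w).Nonempty
    · obtain ⟨w, hw⟩ := h
      exact ⟨x, w, (Finset.mem_filter.mp hw).2⟩
    · have h0 : (Finset.univ.filter fun w => A x w).card = 0 := by
        rw [Finset.card_eq_zero]
        exact Finset.not_nonempty_iff_eq_empty.mp h
      have hpos2 : 0 < (Finset.univ.filter fun w => A w x).card := by omega
      obtain ⟨w, hw⟩ := Finset.card_pos.mp hpos2
      exact ⟨w, x, (Finset.mem_filter.mp hw).2⟩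
  -- a cycle exists
  have hcycex : ∃ l : List V, IsCycleList A l := by
    obtain ⟨m, hch, hlast, hnd⟩ := rtg_path (hconn b a)
    have hne : b ≠ a := fun h => hirr a (h ▸ hab)
    have hmem : a ∈ b :: m := by
      have h := List.getLast?_eq_getLast (List.cons_ne_nil b m)
      rw [hlast] at h
      have h2 : (b :: m).getLast (List.cons_ne_nil _ _) = a := Option.some_injective _ h.symm
      exact h2 ▸ List.getLast_mem _
    have hlen : 2 ≤ (b :: m).length := by
      rcases m with _ | ⟨c, t⟩
      · simp only [List.mem_singleton] at hmem
        exact absurd hmem.symm hne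
      · simp
    refine ⟨b :: m, hlen, hnd, hch, ?_⟩
    intro p hp q hq
    rw [hlast] at hp
    rw [List.head?_cons] at hq
    simp only [Option.mem_def, Option.some.injEq] at hp hq
    rw [← hp, ← hq]
    exact hab
  -- longest cycle
  have hbound : ∀ k : ℕ, (∃ l : List V, IsCycleList A l ∧ l.length = k) → k ≤ n := by
    rintro k ⟨l, hl, rfl⟩
    rw [← hcard]
    exact hl.2.1.length_le_card
  obtain ⟨C, hC, hClen⟩ : ∃ C : List V, IsCycleList A C ∧
      C.length = Nat.findGreatest (fun k => ∃ l : List V, IsCycleList A l ∧ l.length = k) n := by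
    obtain ⟨C₀, hC₀⟩ := hcycex
    have hsp := Nat.findGreatest_spec (m := C₀.length)
      (P := fun k => ∃ l : List V, IsCycleList A l ∧ l.length = k)
      (hbound _ ⟨C₀, hC₀, rfl⟩) ⟨C₀, hC₀, rfl⟩
    obtain ⟨C, hC, hCl⟩ := hsp
    exact ⟨C, hC, hCl⟩
  have hmax : ∀ l : List V, IsCycleList A l → l.length ≤ C.length := by
    intro l hl
    rw [hClen]
    exact Nat.le_findGreatest (hbound _ ⟨l, hl, rfl⟩) ⟨l, hl, rfl⟩
  clear hClen
  haveI : NeZero C.length := ⟨by have := hC.1; omega⟩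
  by_cases hcov : ∀ v : V, v ∈ C
  · exact ⟨C, hC, hcov⟩
  push_neg at hcov
  obtain ⟨v₀, hv₀⟩ := hcov
  exfalso
  -- the set H of vertices off the cycle
  set H : Finset V := Finset.univ.filter (fun y => y ∉ C) with hH
  have hv₀H : v₀ ∈ H := by simp [hH, hv₀]
  have hmemH : ∀ y : V, y ∈ H ↔ y ∉ C := by intro y; simp [hH]
  have hcards : C.length + H.card = n := by
    have h1 : (Finset.univ.filter (fun y => y ∈ C)).card = C.length := by
      have : (Finset.univ.filter (fun y => y ∈ C)) = C.toFinset := by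
        ext y; simp
      rw [this, List.toFinset_card_of_nodup hC.2.1]
    have h2 := Finset.card_filter_add_card_filter_not
      (s := Finset.univ) (p := fun y => y ∈ C)
    rw [Finset.card_univ, hcard] at h2
    have h3 : (Finset.univ.filter (fun a => a ∉ C)).card = H.card := rfl
    rw [← h1, ← h3]
    exact h2
  have hHpos : 1 ≤ H.card := Finset.card_pos.mpr ⟨v₀, hv₀H⟩
  -- S/T position sets
  set Sv : V → Finset (ZMod C.length) :=
    fun y => Finset.univ.filter (fun i => A y (listCyc C i)) with hSv
  set Tv : V → Finset (ZMod C.length) :=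
    fun y => Finset.univ.filter (fun i => A (listCyc C i) y) with hTv
  have hcardZ : Fintype.card (ZMod C.length) = C.length := ZMod.card _
  -- degree decompositions
  have hdsplitP : ∀ y : V, (Finset.univ.filter fun w => A y w).card =
      (Sv y).card + (H.filter fun w => A y w).card := by
    intro y
    have hsplit := Finset.card_filter_add_card_filter_not
      (s := Finset.univ.filter fun w => A y w) (p := fun w => w ∈ C)
    have hCpart : (Sv y).card = ((Finset.univ.filter fun w => A y w).filter (fun w => w ∈ C)).card := by
      apply Finset.card_bij (fun i _ => listCyc C i)
      · intro i hi
        simp only [hSv, Finset.mem_filter, Finset.mem_univ, true_and] at hi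
        simp only [Finset.mem_filter, Finset.mem_univ, true_and]
        exact ⟨hi, (listCyc_mem _).mpr ⟨i, rfl⟩⟩
      · intro i hi j hj hij
        exact listCyc_inj hC.2.1 hij
      · intro w hw
        simp only [Finset.mem_filter, Finset.mem_univ, true_and] at hw
        obtain ⟨i, rfl⟩ := (listCyc_mem w).mp hw.2
        exact ⟨i, by simp [hSv, hw.1], rfl⟩
    have hHpart : ((Finset.univ.filter fun w => A y w).filter (fun a => a ∉ C)) =
        (H.filter fun w => A y w) := by
      ext w
      simp only [Finset.mem_filter, Finset.mem_univ, true_and, hH]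
      tauto
    have e1 := congrArg Finset.card hHpart
    omega
  have hdsplitM : ∀ y : V, (Finset.univ.filter fun w => A w y).card =
      (Tv y).card + (H.filter fun w => A w y).card := by
    intro y
    have hsplit := Finset.card_filter_add_card_filter_not
      (s := Finset.univ.filter fun w => A w y) (p := fun w => w ∈ C)
    have hCpart : (Tv y).card = ((Finset.univ.filter fun w => A w y).filter (fun w => w ∈ C)).card := by
      apply Finset.card_bij (fun i _ => listCyc C i)
      · intro i hi
        simp only [hTv, Finset.mem_filter, Finset.mem_univ, true_and] at hi
        simp only [Finset.mem_filter, Finset.mem_univ, true_and]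
        exact ⟨hi, (listCyc_mem _).mpr ⟨i, rfl⟩⟩
      · intro i hi j hj hij
        exact listCyc_inj hC.2.1 hij
      · intro w hw
        simp only [Finset.mem_filter, Finset.mem_univ, true_and] at hw
        obtain ⟨i, rfl⟩ := (listCyc_mem w).mp hw.2
        exact ⟨i, by simp [hTv, hw.1], rfl⟩
    have hHpart : ((Finset.univ.filter fun w => A w y).filter (fun a => a ∉ C)) =
        (H.filter fun w => A w y) := by
      ext w
      simp only [Finset.mem_filter, Finset.mem_univ, true_and, hH]
      tauto
    have e1 := congrArg Finset.card hHpart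
    omega
  -- no insertion: S/T windows for single vertices
  have hST : ∀ y ∈ H, (Sv y).card + (Tv y).card ≤ C.length := by
    intro y hy
    have hkey : ∀ i : ZMod C.length, i ∈ Tv y → i + 1 ∉ Sv y := by
      intro i hiT hiS
      refine ear (P := [y]) hC hmax (by simp) (by simp) ?_ (List.isChain_singleton _) i 1 le_rfl (by simp) ?_ ?_
      · intro z hz
        simp only [List.mem_singleton] at hz
        rw [hz]
        exact (hmemH y).mp hy
      · simp only [List.head_cons]
        simpa [hTv] using hiT
      · simp only [List.getLast_singleton]
        have e : ((1 : ℕ) : ZMod C.length) = 1 := Nat.cast_one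
        rw [e]
        simpa [hSv] using hiS
    have hdisj2 : Disjoint ((Tv y).image (· + 1)) (Sv y) := by
      rw [Finset.disjoint_left]
      rintro z hz hzS
      obtain ⟨i, hi, rfl⟩ := Finset.mem_image.mp hz
      exact hkey i hi hzS
    have himg : ((Tv y).image (· + 1)).card = (Tv y).card :=
      Finset.card_image_of_injective _ (add_left_injective 1)
    have hun := Finset.card_union_of_disjoint hdisj2
    have hle : (((Tv y).image (· + 1)) ∪ Sv y).card ≤ C.length :=
      le_trans (Finset.card_le_univ _) (le_of_eq hcardZ)
    omega
  -- H degrees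
  have hHdeg : ∀ y ∈ H, H.card ≤ (H.filter fun w => A y w).card + (H.filter fun w => A w y).card := by
    intro y hy
    have h1 := hdeg y
    have h2 := hdsplitP y
    have h3 := hdsplitM y
    have h4 := hST y hy
    omega
  -- reachability within H, strong components
  set AH : V → V → Prop := fun p q => A p q ∧ p ∈ H ∧ q ∈ H with hAH
  set Reach : V → V → Prop := Relation.ReflTransGen AH with hReachDef
  set comp : V → Finset V := fun z => H.filter (fun y => Reach z y ∧ Reach y z) with hcomp
  have hcompmem : ∀ z y, y ∈ comp z ↔ (y ∈ H ∧ Reach z y ∧ Reach y z) := by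
    intro z y
    simp [hcomp]
  have hcompsub : ∀ z, comp z ⊆ H := fun z => Finset.filter_subset _ _
  have hcompself : ∀ z ∈ H, z ∈ comp z := by
    intro z hz
    exact (hcompmem z z).mpr ⟨hz, Relation.ReflTransGen.refl, Relation.ReflTransGen.refl⟩
  have hcompeq : ∀ z y, y ∈ comp z → comp y = comp z := by
    intro z y hy
    obtain ⟨hyH, hzy, hyz⟩ := (hcompmem z y).mp hy
    ext w
    rw [hcompmem, hcompmem]
    constructor
    · rintro ⟨hwH, h1, h2⟩
      exact ⟨hwH, hzy.trans h1, h2.trans hyz⟩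
    · rintro ⟨hwH, h1, h2⟩
      exact ⟨hwH, hyz.trans h1, h2.trans hzy⟩
  have hReachH : ∀ p q : V, p ∈ H → Reach p q → q ∈ H := by
    intro p q hp h
    induction h with
    | refl => exact hp
    | tail _ hst _ => exact hst.2.2
  -- degree bound within a component
  have hcompdeg : ∀ z ∈ H, ∀ y ∈ comp z, (comp z).card ≤
      ((comp z).filter fun w => A y w).card + ((comp z).filter fun w => A w y).card := by
    intro z hz y hy
    have hyH : y ∈ H := hcompsub z hy
    have hKH : comp z ⊆ H := hcompsub z
    have hHsplit : H = comp z ∪ (H \ comp z) := (Finset.union_sdiff_of_subset hKH).symm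
    have hdisjK : Disjoint (comp z) (H \ comp z) := Finset.disjoint_sdiff
    have hsplit1 : (H.filter fun w => A y w).card =
        ((comp z).filter fun w => A y w).card + ((H \ comp z).filter fun w => A y w).card := by
      conv_lhs => rw [hHsplit]
      rw [Finset.filter_union]
      exact Finset.card_union_of_disjoint (Finset.disjoint_filter_filter hdisjK)
    have hsplit2 : (H.filter fun w => A w y).card =
        ((comp z).filter fun w => A w y).card + ((H \ comp z).filter fun w => A w y).card := by
      conv_lhs => rw [hHsplit]
      rw [Finset.filter_union]
      exact Finset.card_union_of_disjoint (Finset.disjoint_filter_filter hdisjK)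
    have hcross : ((H \ comp z).filter fun w => A y w).card +
        ((H \ comp z).filter fun w => A w y).card ≤ (H \ comp z).card := by
      have hd : Disjoint ((H \ comp z).filter fun w => A y w)
          ((H \ comp z).filter fun w => A w y) := by
        rw [Finset.disjoint_left]
        intro w hw1 hw2
        obtain ⟨hwm, hyw⟩ := Finset.mem_filter.mp hw1
        obtain ⟨_, hwy⟩ := Finset.mem_filter.mp hw2
        obtain ⟨hwH, hwK⟩ := Finset.mem_sdiff.mp hwm
        apply hwK
        obtain ⟨_, hzy, hyz⟩ := (hcompmem z y).mp hy
        refine (hcompmem z w).mpr ⟨hwH, ?_, ?_⟩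
        · exact hzy.trans (Relation.ReflTransGen.single ⟨hyw, hyH, hwH⟩)
        · exact (Relation.ReflTransGen.single ⟨hwy, hwH, hyH⟩).trans hyz
      have := Finset.card_union_of_disjoint hd
      have hsub : (((H \ comp z).filter fun w => A y w) ∪
          ((H \ comp z).filter fun w => A w y)) ⊆ H \ comp z := by
        intro w hw
        rcases Finset.mem_union.mp hw with h | h
        · exact Finset.mem_of_mem_filter _ h
        · exact Finset.mem_of_mem_filter _ h
      have := Finset.card_le_card hsub
      omega
    have hcardHK : (H \ comp z).card = H.card - (comp z).card := Finset.card_sdiff_of_subset hKH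
    have hKle : (comp z).card ≤ H.card := Finset.card_le_card hKH
    have := hHdeg y hyH
    omega
  -- each component carries a Hamilton cycle (by induction)
  have hcompHam : ∀ z ∈ H, ∃ L : List V, IsCycleList A L ∧ L.length = (comp z).card ∧
      ∀ u : V, u ∈ L ↔ u ∈ comp z := by
    intro z hz
    have hzK : z ∈ comp z := hcompself z hz
    have hKH : comp z ⊆ H := hcompsub z
    have hKlt : (comp z).card < n := by
      have h1 : (comp z).card ≤ H.card := Finset.card_le_card hKH
      have h2 := hC.1
      omega
    have hreachKK : ∀ p q : V, p ∈ comp z → q ∈ comp z → Reach p q := by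
      intro p q hp hq
      exact ((hcompmem z p).mp hp).2.2.trans ((hcompmem z q).mp hq).2.1
    have hlift : ∀ p q : V, Reach p q → ∀ (hp : p ∈ comp z) (hq : q ∈ comp z),
        Relation.ReflTransGen (fun a b : {w // w ∈ comp z} => A a.val b.val) ⟨p, hp⟩ ⟨q, hq⟩ := by
      intro p q hpq
      induction hpq with
      | refl => intro hp hq; exact Relation.ReflTransGen.refl
      | @tail b c hpb hbc ihb =>
        intro hp hq
        have hbK : b ∈ comp z := by
          refine (hcompmem z b).mpr ⟨hbc.2.1, ?_, ?_⟩
          · exact ((hcompmem z p).mp hp).2.1.trans hpb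
          · exact (Relation.ReflTransGen.single hbc).trans ((hcompmem z c).mp hq).2.2
        exact Relation.ReflTransGen.tail (ihb hp hbK) hbc.1
    have hcardK : Fintype.card {w // w ∈ comp z} = (comp z).card := Fintype.card_coe _
    haveI hdecK : DecidableRel (fun a b : {w // w ∈ comp z} => A a.val b.val) :=
      fun a b => inferInstanceAs (Decidable (A a.val b.val))
    have hsubdegP : ∀ y : {w // w ∈ comp z},
        (Finset.univ.filter fun w : {w // w ∈ comp z} => A y.val w.val).card =
        ((comp z).filter fun w => A y.val w).card := by
      intro y
      apply Finset.card_bij (fun (w : {w // w ∈ comp z}) _ => w.val)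
      · intro w hw
        simp only [Finset.mem_filter, Finset.mem_univ, true_and] at hw ⊢
        exact ⟨w.2, hw⟩
      · intro w1 _ w2 _ h
        exact Subtype.ext h
      · intro w hw
        simp only [Finset.mem_filter] at hw
        exact ⟨⟨w, hw.1⟩, by simp [hw.2], rfl⟩
    have hsubdegM : ∀ y : {w // w ∈ comp z},
        (Finset.univ.filter fun w : {w // w ∈ comp z} => A w.val y.val).card =
        ((comp z).filter fun w => A w y.val).card := by
      intro y
      apply Finset.card_bij (fun (w : {w // w ∈ comp z}) _ => w.val)
      · intro w hw
        simp only [Finset.mem_filter, Finset.mem_univ, true_and] at hw ⊢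
        exact ⟨w.2, hw⟩
      · intro w1 _ w2 _ h
        exact Subtype.ext h
      · intro w hw
        simp only [Finset.mem_filter] at hw
        exact ⟨⟨w, hw.1⟩, by simp [hw.2], rfl⟩
    obtain ⟨lst, hlst, hlstcov⟩ := IH (comp z).card hKlt {w // w ∈ comp z}
      (fun a b => A a.val b.val) hcardK
      (fun p h => hirr p.val h)
      (fun u v => hlift u.val v.val (hreachKK u.val v.val u.2 v.2) u.2 v.2)
      (by
        intro y
        rw [hcardK, hsubdegP y, hsubdegM y]
        exact hcompdeg z hz y.val y.2)
      (Finset.card_pos.mpr ⟨z, hzK⟩)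
    have hlstne : lst ≠ [] := List.ne_nil_of_length_pos (by have := hlst.1; omega)
    refine ⟨lst.map Subtype.val, ⟨?_, ?_, ?_, ?_⟩, ?_, ?_⟩
    · rw [List.length_map]
      exact hlst.1
    · exact hlst.2.1.map Subtype.val_injective
    · exact (List.isChain_map _).mpr hlst.2.2.1
    · intro p hp q hq
      rw [List.getLast?_map, List.getLast?_eq_getLast hlstne] at hp
      rw [List.head?_map, List.head?_eq_head hlstne] at hq
      simp only [Option.map_some, Option.mem_def, Option.some.injEq] at hp hq
      have := hlst.2.2.2 (lst.getLast hlstne)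
        (Option.mem_def.mpr (List.getLast?_eq_getLast hlstne))
        (lst.head hlstne) (Option.mem_def.mpr (List.head?_eq_head hlstne))
      rw [← hp, ← hq]
      exact this
    · rw [List.length_map]
      have hle1 : lst.length ≤ Fintype.card {w // w ∈ comp z} := hlst.2.1.length_le_card
      have hle2 : Fintype.card {w // w ∈ comp z} ≤ lst.length := by
        have hsub : (Finset.univ : Finset {w // w ∈ comp z}) ⊆ lst.toFinset := by
          intro u _
          exact List.mem_toFinset.mpr (hlstcov u)
        have := Finset.card_le_card hsub
        rwa [Finset.card_univ, List.toFinset_card_of_nodup hlst.2.1] at this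
      omega
    · intro u
      constructor
      · intro hu
        obtain ⟨⟨w, hw⟩, _, rfl⟩ := List.mem_map.mp hu
        exact hw
      · intro hu
        exact List.mem_map.mpr ⟨⟨u, hu⟩, hlstcov _, rfl⟩
  -- applying lemX to a component
  have h1X : ∀ z ∈ H,
      (∀ y ∈ comp z, C.length + 2 ≤ (comp z).card + (Sv y).card + (Tv y).card) →
      (∃ y ∈ comp z, (Tv y).Nonempty) → (∃ y ∈ comp z, (Sv y).Nonempty) → False := by
    intro z hz hcond hTne hSne
    obtain ⟨L, hL, hLlen, hLmem⟩ := hcompHam z hz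
    haveI : NeZero L.length := ⟨by have := hL.1; omega⟩
    refine lemX hC hmax hL.1 (listCyc L) (listCyc_inj hL.2.1) (listCyc_arc hL) ?_
      (fun j => Sv (listCyc L j)) (fun j => Tv (listCyc L j)) ?_ ?_ ?_ ?_ ?_
    · intro j
      have hmem : listCyc L j ∈ L := (listCyc_mem _).mpr ⟨j, rfl⟩
      have hmem2 : listCyc L j ∈ comp z := (hLmem _).mp hmem
      exact (hmemH _).mp (hcompsub z hmem2)
    · intro j i
      simp [hSv]
    · intro j i
      simp [hTv]
    · intro j
      have hmem2 : listCyc L j ∈ comp z := (hLmem _).mp ((listCyc_mem _).mpr ⟨j, rfl⟩)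
      have h5 := hcond _ hmem2
      show C.length + 2 ≤ L.length + (Sv (listCyc L j)).card + (Tv (listCyc L j)).card
      omega
    · obtain ⟨y, hy, hne⟩ := hTne
      obtain ⟨j, hj⟩ := (listCyc_mem y).mp ((hLmem y).mpr hy)
      refine ⟨j, ?_⟩
      show (Tv (listCyc L j)).Nonempty
      rw [hj]
      exact hne
    · obtain ⟨y, hy, hne⟩ := hSne
      obtain ⟨j, hj⟩ := (listCyc_mem y).mp ((hLmem y).mpr hy)
      refine ⟨j, ?_⟩
      show (Sv (listCyc L j)).Nonempty
      rw [hj]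
      exact hne
  -- degree condition for terminal components
  have htermcond : ∀ z ∈ H, (∀ p ∈ comp z, ∀ q ∈ H, q ∉ comp z → ¬ A p q) →
      ∀ y ∈ comp z, C.length + 2 ≤ (comp z).card + (Sv y).card + (Tv y).card := by
    intro z hz hterm y hy
    have hyH : y ∈ H := hcompsub z hy
    have h1 : (H.filter fun w => A y w) ⊆ (comp z).erase y := by
      intro w hw
      obtain ⟨hwH, hyw⟩ := Finset.mem_filter.mp hw
      have hwK : w ∈ comp z := by
        by_contra hwK
        exact hterm y hy w hwH hwK hyw
      refine Finset.mem_erase.mpr ⟨?_, hwK⟩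
      intro heq
      rw [heq] at hyw
      exact hirr y hyw
    have h2 : (H.filter fun w => A w y) ⊆ H.erase y := by
      intro w hw
      obtain ⟨hwH, hwy⟩ := Finset.mem_filter.mp hw
      exact Finset.mem_erase.mpr ⟨fun h => hirr y (h ▸ hwy), hwH⟩
    have c1 := Finset.card_le_card h1
    have c1' := Finset.card_erase_of_mem hy
    have c2 := Finset.card_le_card h2
    have c2' := Finset.card_erase_of_mem hyH
    have hd := hdeg y
    have hp := hdsplitP y
    have hm := hdsplitM y
    have hKpos : 1 ≤ (comp z).card := Finset.card_pos.mpr ⟨y, hy⟩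
    omega
  -- degree condition for initial components
  have hinitcond : ∀ z ∈ H, (∀ p ∈ H, p ∉ comp z → ∀ q ∈ comp z, ¬ A p q) →
      ∀ y ∈ comp z, C.length + 2 ≤ (comp z).card + (Sv y).card + (Tv y).card := by
    intro z hz hinit y hy
    have hyH : y ∈ H := hcompsub z hy
    have h1 : (H.filter fun w => A w y) ⊆ (comp z).erase y := by
      intro w hw
      obtain ⟨hwH, hwy⟩ := Finset.mem_filter.mp hw
      have hwK : w ∈ comp z := by
        by_contra hwK
        exact hinit w hwH hwK y hy hwy
      refine Finset.mem_erase.mpr ⟨?_, hwK⟩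
      intro heq
      rw [heq] at hwy
      exact hirr y hwy
    have h2 : (H.filter fun w => A y w) ⊆ H.erase y := by
      intro w hw
      obtain ⟨hwH, hyw⟩ := Finset.mem_filter.mp hw
      exact Finset.mem_erase.mpr ⟨fun h => hirr y (h ▸ hyw), hwH⟩
    have c1 := Finset.card_le_card h1
    have c1' := Finset.card_erase_of_mem hy
    have c2 := Finset.card_le_card h2
    have c2' := Finset.card_erase_of_mem hyH
    have hd := hdeg y
    have hp := hdsplitP y
    have hm := hdsplitM y
    have hKpos : 1 ≤ (comp z).card := Finset.card_pos.mpr ⟨y, hy⟩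
    omega
  -- exits and entries exist by strong connectivity
  have hCne : C ≠ [] := List.ne_nil_of_length_pos (by have := hC.1; omega)
  have hc₀C : C.head hCne ∈ C := List.head_mem hCne
  have hexit : ∀ z ∈ H, (∀ p ∈ comp z, ∀ q ∈ H, q ∉ comp z → ¬ A p q) →
      ∃ y ∈ comp z, (Sv y).Nonempty := by
    intro z hz hterm
    obtain ⟨p, q, hp, hq, hpq⟩ := exists_cross (Pr := fun w => w ∈ comp z)
      (hconn z (C.head hCne)) (hcompself z hz)
      (fun hc => (hmemH _).mp (hcompsub z hc) hc₀C)
    have hqC : q ∈ C := by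
      by_contra hqC
      exact hterm p hp q ((hmemH q).mpr hqC) hq hpq
    obtain ⟨i, hi⟩ := (listCyc_mem q).mp hqC
    refine ⟨p, hp, ⟨i, ?_⟩⟩
    simp only [hSv, Finset.mem_filter, Finset.mem_univ, true_and]
    rw [hi]
    exact hpq
  have hentry : ∀ z ∈ H, (∀ p ∈ H, p ∉ comp z → ∀ q ∈ comp z, ¬ A p q) →
      ∃ y ∈ comp z, (Tv y).Nonempty := by
    intro z hz hinit
    obtain ⟨p, q, hp, hq, hpq⟩ := exists_cross (Pr := fun w => w ∉ comp z)
      (hconn (C.head hCne) z)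
      (fun hc => (hmemH _).mp (hcompsub z hc) hc₀C)
      (fun h => h (hcompself z hz))
    have hqK : q ∈ comp z := not_not.mp hq
    have hpC : p ∈ C := by
      by_contra hpC
      exact hinit p ((hmemH p).mpr hpC) hp q hqK hpq
    obtain ⟨i, hi⟩ := (listCyc_mem p).mp hpC
    refine ⟨q, hqK, ⟨i, ?_⟩⟩
    simp only [hTv, Finset.mem_filter, Finset.mem_univ, true_and]
    rw [hi]
    exact hpq
  -- terminal components receive nothing from C, initial send nothing to C
  have hstepA : ∀ z ∈ H, (∀ p ∈ comp z, ∀ q ∈ H, q ∉ comp z → ¬ A p q) →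
      ∀ y ∈ comp z, (Tv y) = ∅ := by
    intro z hz hterm y hy
    by_contra hne
    exact h1X z hz (htermcond z hz hterm)
      ⟨y, hy, Finset.nonempty_iff_ne_empty.mpr hne⟩ (hexit z hz hterm)
  have hstepB : ∀ z ∈ H, (∀ p ∈ H, p ∉ comp z → ∀ q ∈ comp z, ¬ A p q) →
      ∀ y ∈ comp z, (Sv y) = ∅ := by
    intro z hz hinit y hy
    by_contra hne
    exact h1X z hz (hinitcond z hz hinit) (hentry z hz hinit)
      ⟨y, hy, Finset.nonempty_iff_ne_empty.mpr hne⟩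
  -- abundance
  have habundK : ∀ z ∈ H, (∀ p ∈ comp z, ∀ q ∈ H, q ∉ comp z → ¬ A p q) →
      ∀ y ∈ comp z, C.length + 2 ≤ (comp z).card + (Sv y).card := by
    intro z hz hterm y hy
    have h0 := htermcond z hz hterm y hy
    have hT0 : (Tv y).card = 0 := by rw [hstepA z hz hterm y hy]; rfl
    omega
  have habundL : ∀ z ∈ H, (∀ p ∈ H, p ∉ comp z → ∀ q ∈ comp z, ¬ A p q) →
      ∀ y ∈ comp z, C.length + 2 ≤ (comp z).card + (Tv y).card := by
    intro z hz hinit y hy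
    have h0 := hinitcond z hz hinit y hy
    have hS0 : (Sv y).card = 0 := by rw [hstepB z hz hinit y hy]; rfl
    omega
  -- an initial component exists
  have hinitEx : ∃ z ∈ H, ∀ p ∈ H, p ∉ comp z → ∀ q ∈ comp z, ¬ A p q := by
    have hstep : ∀ k : ℕ, ∀ z ∈ H, (H.filter fun y => Reach y z).card ≤ k →
        ∃ z' ∈ H, ∀ p ∈ H, p ∉ comp z' → ∀ q ∈ comp z', ¬ A p q := by
      intro k
      induction k with
      | zero =>
        intro z hz hk
        exfalso
        have hin : z ∈ H.filter fun y => Reach y z :=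
          Finset.mem_filter.mpr ⟨hz, Relation.ReflTransGen.refl⟩
        have := Finset.card_pos.mpr ⟨z, hin⟩
        omega
      | succ k ih =>
        intro z hz hk
        by_cases hinit : ∀ p ∈ H, p ∉ comp z → ∀ q ∈ comp z, ¬ A p q
        · exact ⟨z, hz, hinit⟩
        · push_neg at hinit
          obtain ⟨p, hpH, hpK, q, hqK, hpq⟩ := hinit
          have hqH : q ∈ H := hcompsub z hqK
          have hpz : Reach p z :=
            (Relation.ReflTransGen.single ⟨hpq, hpH, hqH⟩).trans ((hcompmem z q).mp hqK).2.2
          have hsub : (H.filter fun y => Reach y p) ⊆ (H.filter fun y => Reach y z) := by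
            intro w hw
            obtain ⟨hwH, hwp⟩ := Finset.mem_filter.mp hw
            exact Finset.mem_filter.mpr ⟨hwH, hwp.trans hpz⟩
          have hzin : z ∈ (H.filter fun y => Reach y z) :=
            Finset.mem_filter.mpr ⟨hz, Relation.ReflTransGen.refl⟩
          have hznotin : z ∉ (H.filter fun y => Reach y p) := by
            intro hzin2
            obtain ⟨_, hzp⟩ := Finset.mem_filter.mp hzin2
            exact hpK ((hcompmem z p).mpr ⟨hpH, hzp, hpz⟩)
          have hlt : (H.filter fun y => Reach y p).card < (H.filter fun y => Reach y z).card :=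
            Finset.card_lt_card ⟨hsub, fun hss => hznotin (hss hzin)⟩
          exact ih p hpH (by omega)
    exact hstep (H.filter fun y => Reach y v₀).card v₀ hv₀H le_rfl
  -- from any vertex, a terminal component is reachable
  have htermEx : ∀ x₀ ∈ H, ∃ z ∈ H,
      (∀ p ∈ comp z, ∀ q ∈ H, q ∉ comp z → ¬ A p q) ∧ Reach x₀ z := by
    have hstep : ∀ k : ℕ, ∀ x₀ ∈ H, (H.filter fun y => Reach x₀ y).card ≤ k →
        ∃ z ∈ H, (∀ p ∈ comp z, ∀ q ∈ H, q ∉ comp z → ¬ A p q) ∧ Reach x₀ z := by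
      intro k
      induction k with
      | zero =>
        intro x₀ hx₀ hk
        exfalso
        have hin : x₀ ∈ H.filter fun y => Reach x₀ y :=
          Finset.mem_filter.mpr ⟨hx₀, Relation.ReflTransGen.refl⟩
        have := Finset.card_pos.mpr ⟨x₀, hin⟩
        omega
      | succ k ih =>
        intro x₀ hx₀ hk
        by_cases hterm : ∀ p ∈ comp x₀, ∀ q ∈ H, q ∉ comp x₀ → ¬ A p q
        · exact ⟨x₀, hx₀, hterm, Relation.ReflTransGen.refl⟩
        · push_neg at hterm
          obtain ⟨p, hpK, q, hqH, hqK, hpq⟩ := hterm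
          have hpH : p ∈ H := hcompsub x₀ hpK
          have hxq : Reach x₀ q :=
            ((hcompmem x₀ p).mp hpK).2.1.trans (Relation.ReflTransGen.single ⟨hpq, hpH, hqH⟩)
          have hsub : (H.filter fun y => Reach q y) ⊆ (H.filter fun y => Reach x₀ y) := by
            intro w hw
            obtain ⟨hwH, hqw⟩ := Finset.mem_filter.mp hw
            exact Finset.mem_filter.mpr ⟨hwH, hxq.trans hqw⟩
          have hxin : x₀ ∈ (H.filter fun y => Reach x₀ y) :=
            Finset.mem_filter.mpr ⟨hx₀, Relation.ReflTransGen.refl⟩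
          have hxnotin : x₀ ∉ (H.filter fun y => Reach q y) := by
            intro hxin2
            obtain ⟨_, hqx⟩ := Finset.mem_filter.mp hxin2
            exact hqK ((hcompmem x₀ q).mpr ⟨hqH, hxq, hqx⟩)
          have hlt : (H.filter fun y => Reach q y).card < (H.filter fun y => Reach x₀ y).card :=
            Finset.card_lt_card ⟨hsub, fun hss => hxnotin (hss hxin)⟩
          obtain ⟨z, hzH, hterm', hreach'⟩ := ih q hqH (by omega)
          exact ⟨z, hzH, hterm', hxq.trans hreach'⟩
    intro x₀ hx₀
    exact hstep (H.filter fun y => Reach x₀ y).card x₀ hx₀ le_rfl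
  -- choose an initial component L
  obtain ⟨zL, hzLH, hinitL⟩ := hinitEx
  -- L is not terminal
  have hnotermL : ¬ (∀ p ∈ comp zL, ∀ q ∈ H, q ∉ comp zL → ¬ A p q) := by
    intro hterm
    exact h1X zL hzLH (htermcond zL hzLH hterm) (hentry zL hzLH hinitL) (hexit zL hzLH hterm)
  push_neg at hnotermL
  obtain ⟨w₀, hw₀L, x₀, hx₀H, hx₀L, harc₀⟩ := hnotermL
  obtain ⟨zK, hzKH, htermK, hreachK⟩ := htermEx x₀ hx₀H
  -- nothing can enter the initial component L
  have hnoenterL : ∀ p q : V, Reach p q → p ∉ comp zL → q ∉ comp zL := by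
    intro p q hpq hp hq
    obtain ⟨s, t, hsnot, htin, hst⟩ := exists_cross (Pr := fun w => w ∉ comp zL) hpq hp
      (fun h => h hq)
    exact hinitL s hst.2.1 hsnot t (not_not.mp htin) hst.1
  have hzKnotL : zK ∉ comp zL := hnoenterL x₀ zK hreachK hx₀L
  have hdisjLK : ∀ u, u ∈ comp zK → u ∉ comp zL := by
    intro u huK huL
    have h1 := hcompeq zK u huK
    have h2 := hcompeq zL u huL
    have h3 : zK ∈ comp zK := hcompself zK hzKH
    rw [← h1, h2] at h3
    exact hzKnotL h3
  have habK := habundK zK hzKH htermK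
  have habL := habundL zL hzLH hinitL
  -- Hamilton cycles of the two components
  obtain ⟨LL, hLL, hLLlen, hLLmem⟩ := hcompHam zL hzLH
  obtain ⟨LK, hLK, hLKlen, hLKmem⟩ := hcompHam zK hzKH
  haveI : NeZero LL.length := ⟨by have := hLL.1; omega⟩
  haveI : NeZero LK.length := ⟨by have := hLK.1; omega⟩
  have hLLsub : ∀ u ∈ LL, u ∈ comp zL := fun u hu => (hLLmem u).mp hu
  have hLKsub : ∀ u ∈ LK, u ∈ comp zK := fun u hu => (hLKmem u).mp hu
  -- the wrap of L starting just after w₀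
  obtain ⟨jw, hjw⟩ := (listCyc_mem w₀).mp ((hLLmem w₀).mpr hw₀L)
  obtain ⟨WL, hWLne, hWLnd, hWLch, hWLlen, hWLmem, hWLhead, hWLlast⟩ :=
    wrapList_ofFn (A := A) hLL.1 (listCyc LL) (listCyc_inj hLL.2.1) (listCyc_arc hLL) (jw + 1)
  have hWLsub : ∀ u ∈ WL, u ∈ comp zL := by
    intro u hu
    obtain ⟨i, rfl⟩ := (hWLmem u).mp hu
    exact hLLsub _ ((listCyc_mem _).mpr ⟨i, rfl⟩)
  have hWLlast' : WL.getLast? = some w₀ := by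
    rw [hWLlast, add_sub_cancel_right, hjw]
  -- connecting path from x₀ to the first vertex in comp zK
  have hQ : ∃ Qfull : List V, Qfull ≠ [] ∧ Qfull.Nodup ∧ Qfull.Chain' A ∧
      Qfull.head? = some x₀ ∧ (∃ ystar, Qfull.getLast? = some ystar ∧ ystar ∈ comp zK) ∧
      (∀ u ∈ Qfull, u ∈ H) ∧ (∀ u ∈ Qfull, u ∉ comp zL) ∧
      (∀ u ∈ Qfull.dropLast, u ∉ comp zK) := by
    by_cases hx₀K : x₀ ∈ comp zK
    · refine ⟨[x₀], by simp, by simp, List.isChain_singleton _, rfl, ⟨x₀, rfl, hx₀K⟩, ?_, ?_, by simp⟩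
      · intro u hu
        simp only [List.mem_singleton] at hu
        rw [hu]
        exact hx₀H
      · intro u hu
        simp only [List.mem_singleton] at hu
        rw [hu]
        exact hx₀L
    · obtain ⟨m0, hch0, hlast0, hnd0⟩ := rtg_path (R := AH) hreachK
      have hlastP : ∀ u ∈ (x₀ :: m0).getLast?, u ∈ comp zK := by
        intro u hu
        rw [hlast0] at hu
        simp only [Option.mem_def, Option.some.injEq] at hu
        rw [← hu]
        exact hcompself zK hzKH
      obtain ⟨m1, ystar, hch1, hyK, hfront, hsub1⟩ :=
        chain_prefix_until (Pr := fun u => u ∈ comp zK) m0 x₀ hch0 hx₀K hlastP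
      have hchainmem := chain_all_mem_rtg (R := AH) (m1 ++ [ystar]) x₀ hch1
      refine ⟨x₀ :: (m1 ++ [ystar]), List.cons_ne_nil _ _, hsub1.nodup hnd0,
        chain_weaken (fun p q h => h.1) _ _ hch1, rfl, ⟨ystar, ?_, hyK⟩, ?_, ?_, ?_⟩
      · have e : x₀ :: (m1 ++ [ystar]) = (x₀ :: m1) ++ [ystar] := by simp
        rw [e, List.getLast?_concat]
      · intro u hu
        exact hReachH x₀ u hx₀H (hchainmem u hu)
      · intro u hu
        exact hnoenterL x₀ u (hchainmem u hu) hx₀L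
      · intro u hu
        have e : x₀ :: (m1 ++ [ystar]) = (x₀ :: m1) ++ [ystar] := by simp
        rw [e, List.dropLast_concat] at hu
        exact hfront u hu
  obtain ⟨Qfull, hQne, hQnd, hQch, hQhead, ⟨ystar, hQlast, hystarK⟩, hQH, hQnotL, hQfrontK⟩ := hQ
  -- the wrap of K starting at ystar
  obtain ⟨jy, hjy⟩ := (listCyc_mem ystar).mp ((hLKmem ystar).mpr hystarK)
  obtain ⟨WK, hWKne, hWKnd, hWKch, hWKlen, hWKmem, hWKhead, hWKlast⟩ :=
    wrapList_ofFn (A := A) hLK.1 (listCyc LK) (listCyc_inj hLK.2.1) (listCyc_arc hLK) jy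
  have hWKsub : ∀ u ∈ WK, u ∈ comp zK := by
    intro u hu
    obtain ⟨i, rfl⟩ := (hWKmem u).mp hu
    exact hLKsub _ ((listCyc_mem _).mpr ⟨i, rfl⟩)
  have hWKcons : WK = ystar :: WK.tail := by
    have h2 : WK.head hWKne = ystar := by
      rw [List.head?_eq_head hWKne] at hWKhead
      rw [Option.some_injective _ hWKhead, hjy]
    conv_lhs => rw [← List.cons_head_tail hWKne]
    rw [h2]
  have htailsubK : ∀ u ∈ WK.tail, u ∈ comp zK :=
    fun u hu => hWKsub u (List.mem_of_mem_tail hu)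
  have htailnd : WK.tail.Nodup := (List.tail_sublist WK).nodup hWKnd
  have hystar_not_tail : ystar ∉ WK.tail := by
    have h := hWKnd
    rw [hWKcons] at h
    exact (List.nodup_cons.mp h).1
  have htailne : WK.tail ≠ [] := by
    have h1 : WK.length = WK.tail.length + 1 := by
      rw [hWKcons]; simp
    have h2 := hLK.1
    apply List.ne_nil_of_length_pos
    omega
  have htaillast : WK.tail.getLast? = some (listCyc LK (jy - 1)) := by
    have e : WK = [ystar] ++ WK.tail := by simpa using hWKcons
    rw [e, List.getLast?_append, List.getLast?_eq_getLast htailne] at hWKlast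
    rw [List.getLast?_eq_getLast htailne]
    simpa using hWKlast
  -- Qfull decomposition
  have hQgetLast : Qfull.getLast hQne = ystar := by
    rw [List.getLast?_eq_getLast hQne] at hQlast
    exact Option.some_injective _ hQlast
  have hQdecomp : Qfull = Qfull.dropLast ++ [ystar] := by
    conv_lhs => rw [← List.dropLast_append_getLast hQne]
    rw [hQgetLast]
  -- the big interior path
  set P : List V := WL ++ (Qfull ++ WK.tail) with hPdef
  have hPne : P ≠ [] := by
    rw [hPdef]
    simp only [ne_eq, List.append_eq_nil_iff]
    intro ⟨h1, _⟩
    exact hWLne h1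
  have hPch : P.Chain' A := by
    rw [hPdef, List.Chain', List.isChain_append]
    refine ⟨hWLch, ?_, ?_⟩
    · rw [List.isChain_append]
      refine ⟨hQch, hWKch.tail, ?_⟩
      intro u hu v hv
      rw [hQlast] at hu
      have hu' : ystar = u := by simpa using hu
      rw [← hu']
      have hWKch' := hWKch
      rw [hWKcons] at hWKch'
      have harc := (List.isChain_cons.mp hWKch').1 v hv
      exact harc
    · intro u hu v hv
      rw [hWLlast'] at hu
      have hu' : w₀ = u := by simpa using hu
      rw [List.head?_append, hQhead] at hv
      have hv' : x₀ = v := by simpa using hv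
      rw [← hu', ← hv']
      exact harc₀
  have hPnd : P.Nodup := by
    rw [hPdef]
    refine List.Nodup.append hWLnd (List.Nodup.append hQnd htailnd ?_) ?_
    · intro u huQ hutail
      have huK := htailsubK u hutail
      rw [hQdecomp] at huQ
      rcases List.mem_append.mp huQ with h | h
      · exact hQfrontK u h huK
      · simp only [List.mem_singleton] at h
        rw [h] at hutail
        exact hystar_not_tail hutail
    · intro u huWL huQT
      have huL := hWLsub u huWL
      rcases List.mem_append.mp huQT with h | h
      · exact hQnotL u h huL
      · exact hdisjLK u (htailsubK u h) huL
  have hPdisjC : ∀ u ∈ P, u ∉ C := by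
    intro u hu
    apply (hmemH u).mp
    rw [hPdef] at hu
    rcases List.mem_append.mp hu with h | h
    · exact hcompsub zL (hWLsub u h)
    · rcases List.mem_append.mp h with h2 | h2
      · exact hQH u h2
      · exact hcompsub zK (htailsubK u h2)
  set zstar := listCyc LL (jw + 1) with hzstar
  set ystar' := listCyc LK (jy - 1) with hystar'
  have hPhead : P.head? = some zstar := by
    rw [hPdef, List.head?_append, hWLhead]
    rfl
  have hPlast : P.getLast? = some ystar' := by
    rw [hPdef, List.getLast?_append, List.getLast?_append, htaillast]
    rfl
  have hPlen : LL.length + Qfull.length + WK.length = P.length + 1 := by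
    rw [hPdef]
    simp only [List.length_append, hWLlen]
    have h1 : WK.length = WK.tail.length + 1 := by rw [hWKcons]; simp
    omega
  have hQlenpos : 1 ≤ Qfull.length := by
    rcases Qfull with _ | _
    · exact absurd rfl hQne
    · simp
  -- abundance at the endpoints
  have hzstarL : zstar ∈ comp zL := hLLsub _ ((listCyc_mem _).mpr ⟨jw + 1, rfl⟩)
  have hystar'K : ystar' ∈ comp zK := hLKsub _ ((listCyc_mem _).mpr ⟨jy - 1, rfl⟩)
  have hTzstar := habL zstar hzstarL
  have hSy' := habK ystar' hystar'K
  have hκℓ : LK.length ≤ C.length := hmax LK hLK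
  have hlamℓ : LL.length ≤ C.length := hmax LL hLL
  have hSy'ne : (Sv ystar').Nonempty := by
    apply Finset.card_pos.mp
    omega
  have hTzne : (Tv zstar).Nonempty := by
    apply Finset.card_pos.mp
    omega
  -- the final window contradiction
  have hwin : ∀ i ∈ Tv zstar, ∀ q : ℕ, 1 ≤ q → q ≤ P.length → i + (q : ZMod C.length) ∉ Sv ystar' := by
    intro i hi q h1 h2 hq
    refine ear hC hmax hPne hPnd hPdisjC hPch i q h1 h2 ?_ ?_
    · have hh : P.head hPne = zstar := by
        rw [List.head?_eq_head hPne] at hPhead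
        exact Option.some_injective _ hPhead
      rw [hh]
      simp only [hTv, Finset.mem_filter, Finset.mem_univ, true_and] at hi
      exact hi
    · have hh : P.getLast hPne = ystar' := by
        rw [List.getLast?_eq_getLast hPne] at hPlast
        exact Option.some_injective _ hPlast
      rw [hh]
      simp only [hSv, Finset.mem_filter, Finset.mem_univ, true_and] at hq
      exact hq
  have hdisjW : Disjoint (shiftSet (Tv zstar) P.length) (Sv ystar') := by
    rw [Finset.disjoint_left]
    rintro u hu huS
    obtain ⟨i, hi, q, h1, h2, rfl⟩ := mem_shiftSet.mp hu
    exact hwin i hi q h1 h2 huS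
  have h2L := hLL.1
  have h2K := hLK.1
  have hPlenpos : 1 ≤ P.length := by omega
  have hcardW := shiftSet_card hTzne P.length hPlenpos
  have hWbig : C.length ≤ (Tv zstar).card + P.length - 1 := by omega
  have hWuniv : shiftSet (Tv zstar) P.length = Finset.univ := by
    apply Finset.eq_univ_of_card
    have hle : (shiftSet (Tv zstar) P.length).card ≤ C.length :=
      le_trans (Finset.card_le_univ _) (le_of_eq hcardZ)
    rw [hcardZ]
    omega
  obtain ⟨s0, hs0⟩ := hSy'ne
  have : s0 ∈ shiftSet (Tv zstar) P.length := hWuniv ▸ Finset.mem_univ s0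
  exact Finset.disjoint_left.mp hdisjW this hs0

end GHMain

/-- Ghouila-Houri: a strongly connected digraph with $d^+(x)+d^-(x) \ge |D|$ for
every vertex $x$ is Hamiltonian. -/
theorem ghouila_houri
    {V : Type*} [Fintype V] [DecidableEq V] [Nonempty V]
    (A : V → V → Prop) [DecidableRel A] (hirr : Irreflexive A)
    (hconn : ∀ u v : V, Relation.ReflTransGen A u v)
    (hdeg : ∀ x : V, Fintype.card V ≤
      (Finset.univ.filter fun w => A x w).card + (Finset.univ.filter fun w => A w x).card) :
    ∃ l : List V, IsCycleList A l ∧ ∀ v, v ∈ l :=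
  GHMain.gh_main (Fintype.card V) V A rfl hirr hconn hdeg Fintype.card_pos
end
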